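/- arXiv:1505.05622 — 12 statements merged into one kernel-verified Lean document; each statement's English description precedes it below -/
import Mathlib

section
/- Let H_1, …, H_k be groups (k ≥ 1) and let G = H_1 × ⋯ × H_k be their direct product, with π_j : G → H_j the j-th projection. Fix j ∈ {1, …, k} and let M_j and N_j be normal subgroups of H_j. Let M be the subgroup of G consisting of all tuples whose i-th entry is trivial for i ≠ j and whose j-th entry lies in M_j, and let N be the subgroup of G consisting of all tuples whose j-th entry lies in N_j. Then for each f ∈ Aut_N^M(G), the map α_f : H_j → H_j defined by α_f(h) = π_j(f(ι_j(h))), where ι_j(h) is the tuple with j-th entry h and all other entries trivial, is an automorphism of H_j and belongs to Aut_{N_j}^{M_j}(H_j). -/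
/-- `Aut^M(G)`: automorphisms `f` of `G` with `g⁻¹ * f g ∈ M` for all `g`. -/
def autM {G : Type*} [Group G] (M : Subgroup G) : Subgroup (MulAut G) where
  carrier := {f | ∀ g : G, g⁻¹ * f g ∈ M}
  one_mem' := by intro g; simpa using M.one_mem
  mul_mem' := by
    intro f₁ f₂ h₁ h₂ g
    have key : g⁻¹ * (f₁ * f₂) g = (g⁻¹ * f₂ g) * ((f₂ g)⁻¹ * f₁ (f₂ g)) := by
      rw [MulAut.mul_apply]; group
    rw [key]; exact M.mul_mem (h₂ g) (h₁ (f₂ g))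
  inv_mem' := by
    intro f hf g
    have h := M.inv_mem (hf (f⁻¹ g))
    simpa [MulAut.apply_inv_self, mul_inv_rev] using h

/-- `Aut_N(G)`: automorphisms of `G` fixing `N` elementwise. -/
def autN {G : Type*} [Group G] (N : Subgroup G) : Subgroup (MulAut G) where
  carrier := {f | ∀ n ∈ N, f n = n}
  one_mem' := fun n _ => rfl
  mul_mem' := by
    intro f₁ f₂ h₁ h₂ n hn
    rw [MulAut.mul_apply, h₂ n hn, h₁ n hn]
  inv_mem' := by
    intro f hf n hn
    exact f.injective (by rw [MulAut.apply_inv_self]; exact (hf n hn).symm)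

/-- `Aut_N^M(G) = Aut^M(G) ∩ Aut_N(G)`. -/
def autMN {G : Type*} [Group G] (M N : Subgroup G) : Subgroup (MulAut G) :=
  autM M ⊓ autN N

/-- for `G = H₁ × ⋯ × H_k`, normal subgroups `M_j, N_j ≤ H_j`,
`M = 1 × ⋯ × M_j × ⋯ × 1`, `N = H₁ × ⋯ × N_j × ⋯ × H_k`, each
`f ∈ Aut_N^M(G)` induces `α_f ∈ Aut_{N_j}^{M_j}(H_j)`, `α_f h = π_j (f (ι_j h))`. -/
theorem statement0 {k : ℕ} (hk : 1 ≤ k) (H : Fin k → Type u) [∀ i, Group (H i)]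
    (j : Fin k) (Mj Nj : Subgroup (H j)) [Mj.Normal] [Nj.Normal]
    (f : MulAut (∀ i, H i))
    (hf : f ∈ autMN (Mj.map (MonoidHom.mulSingle H j))
            (Nj.comap (Pi.evalMonoidHom H j))) :
    ∃ α : MulAut (H j),
      (∀ h : H j, α h = f (Pi.mulSingle j h) j) ∧ α ∈ autMN Mj Nj := by
  have hfi : f⁻¹ ∈ autMN (Mj.map (MonoidHom.mulSingle H j))
      (Nj.comap (Pi.evalMonoidHom H j)) := (autMN _ _).inv_mem hf
  have key : ∀ (f' : MulAut (∀ i, H i)),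
      f' ∈ autM (Mj.map (MonoidHom.mulSingle H j)) →
      ∀ h : H j, f' (Pi.mulSingle j h) = Pi.mulSingle j (f' (Pi.mulSingle j h) j) := by
    intro f' hf' h
    obtain ⟨m, hm, heq⟩ := hf' (Pi.mulSingle j h)
    have h2 : f' (Pi.mulSingle j h) = Pi.mulSingle j h * Pi.mulSingle j m := by
      have : Pi.mulSingle j h * MonoidHom.mulSingle H j m =
          Pi.mulSingle j h * ((Pi.mulSingle j h)⁻¹ * f' (Pi.mulSingle j h)) := by rw [heq]
      simpa [MonoidHom.mulSingle_apply, mul_assoc] using this.symm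
    funext i
    by_cases hij : i = j
    · subst hij; rw [Pi.mulSingle_eq_same]
    · rw [h2]
      simp [Pi.mulSingle_eq_of_ne hij]
  refine ⟨{ toFun := fun h => f (Pi.mulSingle j h) j,
            invFun := fun h => f⁻¹ (Pi.mulSingle j h) j,
            left_inv := ?_, right_inv := ?_, map_mul' := ?_ }, fun h => rfl, ?_, ?_⟩
  · intro h
    show f⁻¹ (Pi.mulSingle j (f (Pi.mulSingle j h) j)) j = h
    rw [← key f hf.1 h]
    simp
  · intro h
    show f (Pi.mulSingle j (f⁻¹ (Pi.mulSingle j h) j)) j = h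
    rw [← key f⁻¹ hfi.1 h]
    simp
  · intro a b
    show f (Pi.mulSingle j (a * b)) j = _
    rw [Pi.mulSingle_mul, map_mul, Pi.mul_apply]
  · intro h
    obtain ⟨m, hm, heq⟩ := hf.1 (Pi.mulSingle j h)
    have h3 : m = h⁻¹ * f (Pi.mulSingle j h) j := by
      simpa using congrFun heq j
    show h⁻¹ * f (Pi.mulSingle j h) j ∈ Mj
    rw [← h3]; exact hm
  · intro n hn
    have hmem : Pi.mulSingle j n ∈ Nj.comap (Pi.evalMonoidHom H j) := by
      simpa [Subgroup.mem_comap] using hn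
    have := congrFun (hf.2 _ hmem) j
    simpa using this
end

section
/- Let H_1, …, H_k be groups (k ≥ 1) and let G = H_1 × ⋯ × H_k be their direct product, with π_j : G → H_j the j-th projection. Fix j ∈ {1, …, k} and let M_j and N_j be normal subgroups of H_j. Let M be the subgroup of G consisting of all tuples whose i-th entry is trivial for i ≠ j and whose j-th entry lies in M_j, and let N be the subgroup of G consisting of all tuples whose j-th entry lies in N_j. Then the map φ : Aut_N^M(G) → Aut_{N_j}^{M_j}(H_j) defined by φ(f) = α_f, where α_f(h) = π_j(f(ι_j(h))) and ι_j(h) is the tuple with j-th entry h and all other entries trivial, is a group isomorphism. -/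
section Aux

variable {k : ℕ} {H : Fin k → Type u} [∀ i, Group (H i)] (j : Fin k)

/-- Extend an automorphism of `H j` to the product, acting as identity elsewhere. -/
def liftAut (β : MulAut (H j)) : MulAut (∀ i, H i) :=
  MulEquiv.piCongrRight (Function.update (fun i => MulEquiv.refl (H i)) j β)

lemma liftAut_apply_same (β : MulAut (H j)) (g : ∀ i, H i) :
    liftAut j β g j = β (g j) := by
  simp [liftAut]

lemma liftAut_apply_ne (β : MulAut (H j)) (g : ∀ i, H i) {i : Fin k} (hij : i ≠ j) :
    liftAut j β g i = g i := by
  simp [liftAut, Function.update_of_ne hij]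

variable {j} (Mj Nj : Subgroup (H j))

lemma apply_eq_of_ne {f : MulAut (∀ i, H i)}
    (hf : f ∈ autMN (Mj.map (MonoidHom.mulSingle H j)) (Nj.comap (Pi.evalMonoidHom H j)))
    (g : ∀ i, H i) {i : Fin k} (hij : i ≠ j) : f g i = g i := by
  obtain ⟨m, _, hmeq⟩ := hf.1 g
  have h := congrFun hmeq i
  simp only [MonoidHom.mulSingle_apply, Pi.mulSingle_eq_of_ne hij, Pi.mul_apply,
    Pi.inv_apply] at h
  exact (inv_mul_eq_one.mp h.symm).symm

lemma single_image {f : MulAut (∀ i, H i)}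
    (hf : f ∈ autMN (Mj.map (MonoidHom.mulSingle H j)) (Nj.comap (Pi.evalMonoidHom H j)))
    (h : H j) : f (Pi.mulSingle j h) = Pi.mulSingle j (f (Pi.mulSingle j h) j) := by
  funext i
  by_cases hij : i = j
  · subst hij; simp
  · rw [apply_eq_of_ne Mj Nj hf _ hij, Pi.mulSingle_eq_of_ne hij, Pi.mulSingle_eq_of_ne hij]

lemma apply_eq_same {f : MulAut (∀ i, H i)}
    (hf : f ∈ autMN (Mj.map (MonoidHom.mulSingle H j)) (Nj.comap (Pi.evalMonoidHom H j)))
    (g : ∀ i, H i) : f g j = f (Pi.mulSingle j (g j)) j := by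
  have hsplit : g = Function.update g j 1 * Pi.mulSingle j (g j) := by
    funext i
    by_cases hij : i = j
    · subst hij; simp
    · simp [Function.update_of_ne hij, Pi.mulSingle_eq_of_ne hij]
  have hfix : f (Function.update g j 1) = Function.update g j 1 := by
    refine hf.2 _ ?_
    simpa [Subgroup.mem_comap] using Nj.one_mem
  conv_lhs => rw [hsplit]
  rw [map_mul, Pi.mul_apply, hfix]
  simp

end Aux

/-- with the setup of Statement 0, `f ↦ α_f` is a group isomorphism
`Aut_N^M(G) ≅ Aut_{N_j}^{M_j}(H_j)`. -/
theorem statement1 {k : ℕ} (hk : 1 ≤ k) (H : Fin k → Type u) [∀ i, Group (H i)]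
    (j : Fin k) (Mj Nj : Subgroup (H j)) [Mj.Normal] [Nj.Normal] :
    ∃ φ : (autMN (Mj.map (MonoidHom.mulSingle H j))
            (Nj.comap (Pi.evalMonoidHom H j))) ≃* (autMN Mj Nj),
      ∀ (f : autMN (Mj.map (MonoidHom.mulSingle H j))
              (Nj.comap (Pi.evalMonoidHom H j))) (h : H j),
        (φ f : MulAut (H j)) h = (f : MulAut (∀ i, H i)) (Pi.mulSingle j h) j := by
  classical
  set A := autMN (Mj.map (MonoidHom.mulSingle H j)) (Nj.comap (Pi.evalMonoidHom H j)) with hA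
  -- the automorphism of `H j` induced by `f ∈ A`
  have leftinv : ∀ (f : A) (h : H j),
      ((f⁻¹ : A) : MulAut (∀ i, H i))
        (Pi.mulSingle j ((f : MulAut (∀ i, H i)) (Pi.mulSingle j h) j)) j = h := by
    intro f h
    rw [← single_image Mj Nj f.2 h]
    have : ((f⁻¹ : A) : MulAut (∀ i, H i)) = ((f : MulAut (∀ i, H i)))⁻¹ := rfl
    rw [this, MulAut.inv_def, MulEquiv.symm_apply_apply, Pi.mulSingle_eq_same]
  let αEq : A → MulAut (H j) := fun f =>
    { toFun := fun h => (f : MulAut (∀ i, H i)) (Pi.mulSingle j h) j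
      invFun := fun h => ((f⁻¹ : A) : MulAut (∀ i, H i)) (Pi.mulSingle j h) j
      left_inv := fun h => leftinv f h
      right_inv := fun h => by simpa using leftinv f⁻¹ h
      map_mul' := fun h₁ h₂ => by
        show (f : MulAut (∀ i, H i)) (Pi.mulSingle j (h₁ * h₂)) j = _
        rw [show Pi.mulSingle j (h₁ * h₂) = Pi.mulSingle j h₁ * Pi.mulSingle j h₂ from
          map_mul (MonoidHom.mulSingle H j) h₁ h₂, map_mul]
        rfl }
  have αmem : ∀ f : A, αEq f ∈ autMN Mj Nj := by
    intro f
    constructor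
    · intro h
      obtain ⟨m, hm, hmeq⟩ := f.2.1 (Pi.mulSingle j h)
      have heq := congrFun hmeq j
      simp only [MonoidHom.mulSingle_apply, Pi.mulSingle_eq_same, Pi.mul_apply,
        Pi.inv_apply, Pi.mulSingle_eq_same] at heq
      have : h⁻¹ * αEq f h = m := heq.symm
      rw [← this] at hm; exact hm
    · intro n hn
      have hmem : Pi.mulSingle j n ∈ Nj.comap (Pi.evalMonoidHom H j) := by
        simp [Subgroup.mem_comap, hn]
      have := f.2.2 _ hmem
      show (f : MulAut (∀ i, H i)) (Pi.mulSingle j n) j = n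
      rw [this, Pi.mulSingle_eq_same]
  have liftmem : ∀ β : autMN Mj Nj, liftAut j (β : MulAut (H j)) ∈ A := by
    intro β
    constructor
    · intro g
      have : g⁻¹ * liftAut j (β : MulAut (H j)) g
          = MonoidHom.mulSingle H j ((g j)⁻¹ * (β : MulAut (H j)) (g j)) := by
        funext i
        by_cases hij : i = j
        · subst hij
          simp [liftAut_apply_same]
        · simp [liftAut_apply_ne _ _ _ hij, Pi.mulSingle_eq_of_ne hij]
      rw [this]
      exact ⟨_, β.2.1 (g j), rfl⟩
    · intro n hn
      funext i
      by_cases hij : i = j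
      · subst hij
        rw [liftAut_apply_same]
        exact β.2.2 _ hn
      · exact liftAut_apply_ne _ _ _ hij
  refine ⟨{ toFun := fun f => ⟨αEq f, αmem f⟩
            invFun := fun β => ⟨liftAut j (β : MulAut (H j)), liftmem β⟩
            left_inv := ?_
            right_inv := ?_
            map_mul' := ?_ }, fun f h => rfl⟩
  · intro f
    ext g i
    by_cases hij : i = j
    · subst hij
      rw [liftAut_apply_same]
      exact (apply_eq_same Mj Nj f.2 g).symm
    · rw [liftAut_apply_ne _ _ _ hij, apply_eq_of_ne Mj Nj f.2 g hij]
  · intro β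
    ext h
    show liftAut j (β : MulAut (H j)) (Pi.mulSingle j h) j = (β : MulAut (H j)) h
    rw [liftAut_apply_same, Pi.mulSingle_eq_same]
  · intro f₁ f₂
    ext h
    show ((f₁ : MulAut (∀ i, H i)) ((f₂ : MulAut (∀ i, H i)) (Pi.mulSingle j h))) j
      = (f₁ : MulAut (∀ i, H i)) (Pi.mulSingle j (αEq f₂ h)) j
    rw [show Pi.mulSingle j (αEq f₂ h)
        = (f₂ : MulAut (∀ i, H i)) (Pi.mulSingle j h) from (single_image Mj Nj f₂.2 h).symm]
end

section
/- Let G = H × A be a group, where H is a purely non-abelian group and A is a non-trivial abelian group. Then, for every n ≥ 2, there exists a group isomorphism φ : Aut_{Z(G)}^{γ_n(G)}(G) → Aut_{Z(H)}^{γ_n(H)}(H) such that φ maps Aut_c^{n-1}(G) onto Aut_c^{n-1}(H). -/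
/-- `Aut_c^m(G)`: `m`-th class preserving automorphisms, conjugation by
elements of `γ_m(G) = (⊤ : Subgroup G).lowerCentralSeries (m-1)`. -/
def autC (G : Type*) [Group G] (m : ℕ) : Subgroup (MulAut G) where
  carrier := {f | ∀ g : G, ∃ x ∈ (⊤ : Subgroup G).lowerCentralSeries (m - 1), f g = x⁻¹ * g * x}
  one_mem' := fun g => ⟨1, Subgroup.one_mem _, by simp⟩
  mul_mem' := by
    intro f₁ f₂ h₁ h₂ g
    obtain ⟨x, hx, hx2⟩ := h₂ g
    obtain ⟨y, hy, hy2⟩ := h₁ (x⁻¹ * g * x)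
    exact ⟨x * y, Subgroup.mul_mem _ hx hy, by rw [MulAut.mul_apply, hx2, hy2]; group⟩
  inv_mem' := by
    intro f hf g
    obtain ⟨x, hx, hx2⟩ := hf (f⁻¹ g)
    refine ⟨x⁻¹, Subgroup.inv_mem _ hx, ?_⟩
    rw [MulAut.apply_inv_self] at hx2
    rw [inv_inv]
    conv_rhs => rw [hx2]
    group

/-- A group is purely non-abelian if it has no non-trivial abelian direct factor. -/
def PurelyNonabelian (H : Type u) [Group H] : Prop :=
  ¬ ∃ (K B : Type u) (_ : Group K) (_ : CommGroup B),
      Nontrivial B ∧ Nonempty (H ≃* K × B)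

section StatementTwoAux

variable {H A : Type u} [Group H] [CommGroup A] {k : ℕ}

private lemma comm_lcs_eq_bot {k : ℕ} (hk : 1 ≤ k) : (⊤ : Subgroup A).lowerCentralSeries k = ⊥ := by
  have h1 : (⊤ : Subgroup A).lowerCentralSeries 1 = ⊥ :=
    Subgroup.lowerCentralSeries_succ_eq_bot ⊤ (fun x _ =>
      Subgroup.mem_center_iff.mpr fun g => mul_comm g x)
  exact le_bot_iff.mp (h1 ▸ Subgroup.lowerCentralSeries_antitone ⊤ hk)

private lemma fst_mem_lcs {x : H × A} {k : ℕ} (hx : x ∈ (⊤ : Subgroup (H × A)).lowerCentralSeries k) :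
    x.1 ∈ (⊤ : Subgroup H).lowerCentralSeries k :=
  lowerCentralSeries.map (MonoidHom.fst H A) k ⟨x, hx, rfl⟩

private lemma inl_mem_lcs {y : H} {k : ℕ} (hy : y ∈ (⊤ : Subgroup H).lowerCentralSeries k) :
    ((y, 1) : H × A) ∈ (⊤ : Subgroup (H × A)).lowerCentralSeries k :=
  lowerCentralSeries.map (MonoidHom.inl H A) k ⟨y, hy, rfl⟩

private lemma inr_mem_center (a : A) : ((1, a) : H × A) ∈ Subgroup.center (H × A) :=
  Subgroup.mem_center_iff.mpr fun g => by
    ext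
    · simp
    · simp [mul_comm]

private lemma inl_mem_center {z : H} (hz : z ∈ Subgroup.center H) :
    ((z, 1) : H × A) ∈ Subgroup.center (H × A) :=
  Subgroup.mem_center_iff.mpr fun g => by
    ext
    · exact Subgroup.mem_center_iff.mp hz g.1
    · simp

private lemma fst_mem_center {z : H × A} (hz : z ∈ Subgroup.center (H × A)) :
    z.1 ∈ Subgroup.center H :=
  Subgroup.mem_center_iff.mpr fun g => congrArg Prod.fst
    (Subgroup.mem_center_iff.mp hz (g, 1))

private lemma key_snd (hk : 1 ≤ k) (f : MulAut (H × A))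
    (hf : f ∈ autM ((⊤ : Subgroup (H × A)).lowerCentralSeries k)) (h : H) :
    (f (h, 1)).2 = 1 := by
  have hmem := hf (h, 1)
  have h2 : ((h, 1)⁻¹ * f (h, 1) : H × A).2 ∈ (⊤ : Subgroup A).lowerCentralSeries k :=
    lowerCentralSeries.map (MonoidHom.snd H A) k ⟨_, hmem, rfl⟩
  rw [comm_lcs_eq_bot hk, Subgroup.mem_bot] at h2
  simpa using h2

private lemma f_apply (hk : 1 ≤ k) (f : MulAut (H × A))
    (hfM : f ∈ autM ((⊤ : Subgroup (H × A)).lowerCentralSeries k))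
    (hfN : f ∈ autN (Subgroup.center (H × A))) (h : H) (a : A) :
    f (h, a) = ((f (h, 1)).1, a) := by
  have h1 : ((h, a) : H × A) = (h, 1) * (1, a) := by simp
  rw [h1, map_mul, hfN _ (inr_mem_center a)]
  ext
  · simp
  · simp [key_snd hk f hfM h]

variable (hk : 1 ≤ k)

/-- The automorphism of `H` induced by an automorphism in
`Aut_{Z(H×A)}^{γ(H×A)}(H × A)`. -/
private def theta
    (f : (autMN ((⊤ : Subgroup (H × A)).lowerCentralSeries k) (Subgroup.center (H × A)))) :
    MulAut H where
  toFun h := ((f : MulAut (H × A)) (h, 1)).1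
  invFun h := ((f⁻¹ : (autMN ((⊤ : Subgroup (H × A)).lowerCentralSeries k)
      (Subgroup.center (H × A)))) : MulAut (H × A)) (h, 1) |>.1
  left_inv h := by
    dsimp only
    have hs : ((f : MulAut (H × A)) (h, 1)).2 = 1 :=
      key_snd hk _ (Subgroup.mem_inf.mp f.2).1 h
    have : ((((f : MulAut (H × A)) (h, 1)).1, 1) : H × A) = (f : MulAut (H × A)) (h, 1) := by
      ext
      · rfl
      · exact hs.symm
    rw [this]
    have : ((f⁻¹ : (autMN ((⊤ : Subgroup (H × A)).lowerCentralSeries k)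
        (Subgroup.center (H × A)))) : MulAut (H × A)) ((f : MulAut (H × A)) (h, 1))
        = ((h, 1) : H × A) := by
      show ((f : MulAut (H × A))⁻¹) ((f : MulAut (H × A)) (h, 1)) = _
      simp
    rw [this]
  right_inv h := by
    dsimp only
    have hs : (((f⁻¹ : (autMN ((⊤ : Subgroup (H × A)).lowerCentralSeries k)
        (Subgroup.center (H × A)))) : MulAut (H × A)) (h, 1)).2 = 1 :=
      key_snd hk _ (Subgroup.mem_inf.mp (f⁻¹).2).1 h
    have : (((((f⁻¹ : (autMN ((⊤ : Subgroup (H × A)).lowerCentralSeries k)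
        (Subgroup.center (H × A)))) : MulAut (H × A)) (h, 1)).1, 1) : H × A)
        = ((f : MulAut (H × A))⁻¹) (h, 1) := by
      ext
      · rfl
      · exact hs.symm
    rw [this]
    simp
  map_mul' h₁ h₂ := by
    show ((f : MulAut (H × A)) (h₁ * h₂, 1)).1 = ((f : MulAut (H × A)) (h₁, 1)).1 * ((f : MulAut (H × A)) (h₂, 1)).1
    have : ((h₁ * h₂, 1) : H × A) = (h₁, 1) * (h₂, 1) := by simp
    rw [this, map_mul]
    rfl

private lemma theta_mem
    (f : (autMN ((⊤ : Subgroup (H × A)).lowerCentralSeries k) (Subgroup.center (H × A)))) :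
    theta hk f ∈ autMN ((⊤ : Subgroup H).lowerCentralSeries k) (Subgroup.center H) := by
  refine Subgroup.mem_inf.mpr ⟨fun h => ?_, fun z hz => ?_⟩
  · have hmem := (Subgroup.mem_inf.mp f.2).1 (h, 1)
    have := fst_mem_lcs hmem
    exact this
  · have := (Subgroup.mem_inf.mp f.2).2 _ (inl_mem_center hz)
    show ((f : MulAut (H × A)) (z, 1)).1 = z
    rw [this]

private def phiInvAut (t : MulAut H) : MulAut (H × A) :=
  MulEquiv.prodCongr t (MulEquiv.refl A)

private lemma phiInv_mem
    (t : (autMN ((⊤ : Subgroup H).lowerCentralSeries k) (Subgroup.center H))) :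
    phiInvAut (t : MulAut H) ∈
      autMN ((⊤ : Subgroup (H × A)).lowerCentralSeries k) (Subgroup.center (H × A)) := by
  refine Subgroup.mem_inf.mpr ⟨fun g => ?_, fun z hz => ?_⟩
  · have hmem := (Subgroup.mem_inf.mp t.2).1 g.1
    have h1 : g⁻¹ * phiInvAut (t : MulAut H) g = ((g.1⁻¹ * (t : MulAut H) g.1, 1) : H × A) := by
      ext
      · rfl
      · show g.2⁻¹ * g.2 = 1
        simp
    rw [h1]
    exact inl_mem_lcs hmem
  · have h1 := (Subgroup.mem_inf.mp t.2).2 _ (fst_mem_center hz)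
    show ((t : MulAut H) z.1, z.2) = z
    rw [h1]

end StatementTwoAux

/-- for `G = H × A` with `H` purely non-abelian and `A` a non-trivial
abelian group, and `n ≥ 2`, there is an isomorphism
`φ : Aut_{Z(G)}^{γ_n(G)}(G) ≅ Aut_{Z(H)}^{γ_n(H)}(H)` mapping `Aut_c^{n-1}(G)`
onto `Aut_c^{n-1}(H)`.  Here `γ_n(G) = (⊤ : Subgroup G).lowerCentralSeries (n-1)`. -/
theorem statement2 (H A : Type u) [Group H] [CommGroup A] [Nontrivial A]
    (hH : PurelyNonabelian H) (n : ℕ) (hn : 2 ≤ n) :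
    ∃ φ : (autMN ((⊤ : Subgroup (H × A)).lowerCentralSeries (n - 1)) (Subgroup.center (H × A))) ≃*
          (autMN ((⊤ : Subgroup H).lowerCentralSeries (n - 1)) (Subgroup.center H)),
      ∀ f : (autMN ((⊤ : Subgroup (H × A)).lowerCentralSeries (n - 1)) (Subgroup.center (H × A))),
        (f : MulAut (H × A)) ∈ autC (H × A) (n - 1) ↔
          (φ f : MulAut H) ∈ autC H (n - 1) := by
  have hk : 1 ≤ n - 1 := le_tsub_of_add_le_left hn
  set k := n - 1 with hkdef
  refine ⟨{ toFun := fun f => ⟨theta hk f, theta_mem hk f⟩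
            invFun := fun t => ⟨phiInvAut (t : MulAut H), phiInv_mem t⟩
            left_inv := ?_
            right_inv := ?_
            map_mul' := ?_ }, ?_⟩
  · intro f
    refine Subtype.ext (MulEquiv.ext fun g => ?_)
    show phiInvAut (theta hk f : MulAut H) g = (f : MulAut (H × A)) g
    have := f_apply hk (f : MulAut (H × A)) (Subgroup.mem_inf.mp f.2).1
      (Subgroup.mem_inf.mp f.2).2 g.1 g.2
    rw [show ((g.1, g.2) : H × A) = g from rfl] at this
    rw [this]
    rfl
  · intro t
    refine Subtype.ext (MulEquiv.ext fun h => ?_)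
    show (phiInvAut (A := A) (t : MulAut H) ((h, 1) : H × A)).1 = (t : MulAut H) h
    rfl
  · intro f g
    refine Subtype.ext (MulEquiv.ext fun h => ?_)
    show ((f * g : MulAut (H × A)) (h, 1)).1
      = (theta hk f : MulAut H) ((theta hk g : MulAut H) h)
    have hs : ((g : MulAut (H × A)) (h, 1)).2 = 1 :=
      key_snd hk _ (Subgroup.mem_inf.mp g.2).1 h
    have h1 : ((((g : MulAut (H × A)) (h, 1)).1, 1) : H × A)
        = (g : MulAut (H × A)) (h, 1) := by
      ext
      · rfl
      · exact hs.symm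
    show ((f : MulAut (H × A)) ((g : MulAut (H × A)) (h, 1))).1 = _
    show _ = ((f : MulAut (H × A)) ((((g : MulAut (H × A)) (h, 1)).1, 1) : H × A)).1
    rw [h1]
  · intro f
    constructor
    · intro hf h
      obtain ⟨x, hx, hx2⟩ := hf (h, 1)
      refine ⟨x.1, fst_mem_lcs hx, ?_⟩
      show ((f : MulAut (H × A)) (h, 1)).1 = _
      rw [hx2]
      rfl
    · intro hf g
      obtain ⟨y, hy, hy2⟩ := hf g.1
      refine ⟨((y, 1) : H × A), inl_mem_lcs hy, ?_⟩
      have := f_apply hk (f : MulAut (H × A)) (Subgroup.mem_inf.mp f.2).1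
        (Subgroup.mem_inf.mp f.2).2 g.1 g.2
      rw [show ((g.1, g.2) : H × A) = g from rfl] at this
      rw [this]
      have : ((f : MulAut (H × A)) (g.1, 1)).1 = y⁻¹ * g.1 * y := hy2
      ext
      · exact this
      · show g.2 = 1⁻¹ * g.2 * 1
        simp
end

section
/- Let G be a group and let M and N be normal subgroups of G such that M is abelian and [N, M] = 1 (every element of N commutes with every element of M). Then: (1) for each f ∈ Aut_N^M(G), if g_1, g_2 ∈ G satisfy g_1N = g_2N then g_1⁻¹f(g_1) = g_2⁻¹f(g_2), so the map α_f : G/N → M given by α_f(gN) = g⁻¹f(g) is well defined; (2) if f_1, f_2 ∈ Aut_N^M(G) and f_1 ≠ f_2, then α_{f_1} ≠ α_{f_2}. -/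
/-- if `M, N ⊴ G`, `M` abelian and `[N, M] = 1`, then
(1) for `f ∈ Aut_N^M(G)` the value `g⁻¹ * f g` only depends on the coset `gN`,
so `α_f : G/N → M`, `α_f (gN) = g⁻¹ f(g)`, is well defined; and
(2) distinct `f₁ ≠ f₂` in `Aut_N^M(G)` yield distinct maps `α_{f₁} ≠ α_{f₂}`. -/
theorem statement3 {G : Type*} [Group G] (M N : Subgroup G) [M.Normal] [N.Normal]
    (hM : ∀ a ∈ M, ∀ b ∈ M, a * b = b * a)
    (hNM : ∀ a ∈ N, ∀ b ∈ M, a * b = b * a) :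
    (∀ f ∈ autMN M N, ∀ g₁ g₂ : G, (g₁ : G ⧸ N) = (g₂ : G ⧸ N) →
        g₁⁻¹ * f g₁ = g₂⁻¹ * f g₂) ∧
    (∀ f₁ ∈ autMN M N, ∀ f₂ ∈ autMN M N, ∀ α₁ α₂ : G ⧸ N → G,
        (∀ g : G, α₁ g = g⁻¹ * f₁ g) → (∀ g : G, α₂ g = g⁻¹ * f₂ g) →
        f₁ ≠ f₂ → α₁ ≠ α₂) := by
  constructor
  · rintro f ⟨hfM, hfN⟩ g₁ g₂ h
    rw [QuotientGroup.eq] at h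
    set n := g₁⁻¹ * g₂ with hn
    have hg₂ : g₂ = g₁ * n := by rw [hn]; group
    have hfn : f n = n := hfN n h
    have : g₂⁻¹ * f g₂ = n⁻¹ * (g₁⁻¹ * f g₁) * n := by
      rw [hg₂, map_mul, hfn]; group
    rw [this, mul_assoc, ← hNM n h _ (hfM g₁)]; group
  · rintro f₁ ⟨hf₁M, hf₁N⟩ f₂ _ α₁ α₂ hα₁ hα₂ hne heq
    apply hne
    ext g
    have := hα₁ g
    rw [heq, hα₂ g] at this
    exact mul_left_cancel this.symm
end

section
/- Let G be a finite group, let M be a normal subgroup of G contained in the center Z(G), and let N be a normal subgroup of G with M ⊆ N. Then the map φ : Aut_N^M(G) → Hom(G/N, M) defined by φ(f) = α_f, where α_f(gN) = g⁻¹f(g), is a group isomorphism. (Here Hom(G/N, M) is the abelian group of all group homomorphisms from G/N to M under pointwise multiplication.) -/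
/-- for a finite group `G`, `M ⊴ G` central, `N ⊴ G` with `M ⊆ N`,
the map `φ(f) = α_f`, `α_f(gN) = g⁻¹ f(g)`, is a group isomorphism from
`Aut_N^M(G)` onto the group `Hom(G/N, M)` (with pointwise multiplication). -/
theorem statement5 {G : Type*} [Group G] [Finite G] (M N : Subgroup G)
    [M.Normal] [N.Normal] (hM : M ≤ Subgroup.center G) (hMN : M ≤ N) :
    ∃ φ : (autMN M N) ≃ ((G ⧸ N) →* M),
      (∀ (f : autMN M N) (g : G),
          (φ f (g : G ⧸ N) : G) = g⁻¹ * (f : MulAut G) g) ∧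
      (∀ (f₁ f₂ : autMN M N) (x : G ⧸ N),
          φ (f₁ * f₂) x = φ f₁ x * φ f₂ x) := by
  classical
  have hcomm : ∀ m ∈ M, ∀ a : G, m * a = a * m := fun m hm a =>
    ((Subgroup.mem_center_iff.mp (hM hm)) a).symm
  have hMmem : ∀ f : autMN M N, ∀ g : G, g⁻¹ * (f : MulAut G) g ∈ M :=
    fun f g => (Subgroup.mem_inf.mp f.2).1 g
  have hNfix : ∀ f : autMN M N, ∀ n ∈ N, (f : MulAut G) n = n :=
    fun f => (Subgroup.mem_inf.mp f.2).2
  -- the homomorphism G →* M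
  let α : (autMN M N) → (G →* M) := fun f =>
    { toFun := fun g => ⟨g⁻¹ * (f : MulAut G) g, hMmem f g⟩
      map_one' := by ext; simp
      map_mul' := by
        intro g h
        ext
        show (g*h)⁻¹ * (f : MulAut G) (g*h) = (g⁻¹ * (f : MulAut G) g) * (h⁻¹ * (f : MulAut G) h)
        rw [map_mul, mul_inv_rev]
        calc h⁻¹ * g⁻¹ * ((f : MulAut G) g * (f : MulAut G) h)
            = h⁻¹ * (g⁻¹ * (f : MulAut G) g) * (f : MulAut G) h := by group
          _ = (g⁻¹ * (f : MulAut G) g) * h⁻¹ * (f : MulAut G) h := by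
              rw [← hcomm _ (hMmem f g) h⁻¹]
          _ = (g⁻¹ * (f : MulAut G) g) * (h⁻¹ * (f : MulAut G) h) := by group }
  let toHom : (autMN M N) → ((G ⧸ N) →* M) := fun f =>
    QuotientGroup.lift N (α f) (by
      intro n hn
      ext
      show n⁻¹ * (f : MulAut G) n = 1
      rw [hNfix f n hn, inv_mul_cancel])
  have hval : ∀ (f : autMN M N) (g : G), (toHom f (g : G ⧸ N) : G) = g⁻¹ * (f : MulAut G) g :=
    fun f g => rfl
  have hinj : Function.Injective toHom := by
    intro f₁ f₂ h
    ext g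
    have := congrArg Subtype.val (congrArg (fun p => p (g : G ⧸ N)) h)
    simp only [hval] at this
    exact mul_left_cancel ((hval f₁ g).symm.trans ((hval f₁ g).trans this))
  have hsurj : Function.Surjective toHom := by
    intro χ
    -- build the automorphism g ↦ g * χ g
    have hchiN : ∀ n ∈ N, (χ (n : G ⧸ N) : G) = 1 := by
      intro n hn
      have : ((n : G ⧸ N)) = 1 := (QuotientGroup.eq_one_iff n).mpr hn
      rw [this, map_one, OneMemClass.coe_one]
    let e : G →* G :=
      { toFun := fun g => g * (χ (g : G ⧸ N) : G)
        map_one' := by simp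
        map_mul' := by
          intro g h
          show (g * h) * (χ ((g:G ⧸ N) * h) : G) = (g * χ g) * (h * χ h)
          rw [map_mul, Subgroup.coe_mul]
          have : (χ (g : G ⧸ N) : G) * h = h * (χ (g : G ⧸ N) : G) :=
            hcomm _ (χ (g : G ⧸ N)).2 h
          calc g * h * ((χ (g:G⧸N) : G) * (χ (h:G⧸N) : G))
              = g * (h * (χ (g:G⧸N) : G)) * (χ (h:G⧸N) : G) := by group
            _ = g * ((χ (g:G⧸N) : G) * h) * (χ (h:G⧸N) : G) := by rw [this]
            _ = (g * χ g) * (h * χ h) := by group }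
    have heinj : Function.Injective e := by
      intro g h hgh
      have hgh' : g * (χ (g : G ⧸ N) : G) = h * (χ (h : G ⧸ N) : G) := hgh
      have hquot : (g : G ⧸ N) = (h : G ⧸ N) := by
        rw [QuotientGroup.eq]
        have : g⁻¹ * h = (χ (g : G ⧸ N) : G) * (χ (h : G ⧸ N) : G)⁻¹ := by
          apply mul_left_cancel (a := g)
          rw [← mul_assoc, ← mul_assoc, hgh']
          group
        rw [this]
        exact hMN (M.mul_mem (χ (g:G⧸N)).2 (M.inv_mem (χ (h:G⧸N)).2))
      rw [hquot] at hgh'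
      exact mul_right_cancel hgh'
    have hebij : Function.Bijective e := (Finite.injective_iff_bijective).mp heinj
    let E : MulAut G := MulEquiv.ofBijective e hebij
    have hEapp : ∀ g : G, E g = g * (χ (g : G ⧸ N) : G) := fun g => rfl
    have hEmem : E ∈ autMN M N := by
      rw [autMN, Subgroup.mem_inf]
      constructor
      · intro g
        rw [hEapp]
        simpa using (χ (g : G ⧸ N)).2
      · intro n hn
        rw [hEapp, hchiN n hn, mul_one]
    refine ⟨⟨E, hEmem⟩, MonoidHom.ext fun x => ?_⟩
    induction x using QuotientGroup.induction_on with
    | H g =>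
      ext
      rw [hval]
      show g⁻¹ * E g = _
      rw [hEapp]; group
  let φ := Equiv.ofBijective toHom ⟨hinj, hsurj⟩
  refine ⟨φ, fun f g => hval f g, ?_⟩
  intro f₁ f₂ x
  induction x using QuotientGroup.induction_on with
  | H g =>
    ext
    show (toHom (f₁ * f₂) (g : G ⧸ N) : G) = (toHom f₁ (g:G⧸N) : G) * (toHom f₂ (g:G⧸N) : G)
    rw [hval, hval, hval]
    show g⁻¹ * (f₁ : MulAut G) ((f₂ : MulAut G) g) = _
    have hm2 := hMmem f₂ g
    set m := g⁻¹ * (f₂ : MulAut G) g with hm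
    have hf2g : (f₂ : MulAut G) g = g * m := by rw [hm]; group
    have hfix : (f₁ : MulAut G) m = m := hNfix f₁ m (hMN hm2)
    rw [hf2g, map_mul, hfix]
    group
end

section
/- Let n ≥ 2, let G be a finite nilpotent group of nilpotency class at most n, and let H be a central subgroup of G (H ⊆ Z(G)) such that γ_n(G) ⊆ H. Then the map f ↦ α_f, where α_f(gH) = g⁻¹f(g), is a group isomorphism from Aut_c^{n-1}(G) onto Hom_c(G/H, γ_n(G)). -/
/-- for `n ≥ 2`, a finite nilpotent group `G` of class at most `n`
(`γ_{n+1}(G) = 1`, i.e. `lowerCentralSeries G n = ⊥`) and a central subgroup `H`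
with `γ_n(G) ⊆ H`, the map `f ↦ α_f`, `α_f(gH) = g⁻¹ f(g)`, is a group
isomorphism from `Aut_c^{n-1}(G)` onto `Hom_c(G/H, γ_n(G))`
(with pointwise multiplication). -/
theorem statement6 {G : Type*} [Group G] [Finite G] (n : ℕ) (hn : 2 ≤ n)
    (hnil : (⊤ : Subgroup G).lowerCentralSeries n = ⊥)
    (H : Subgroup G) (hH : H ≤ Subgroup.center G)
    (hγ : (⊤ : Subgroup G).lowerCentralSeries (n - 1) ≤ H) :
    letI : H.Normal := ⟨fun a ha g => by
      rw [(Subgroup.mem_center_iff.mp (hH ha)) g, mul_inv_cancel_right]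
      exact ha⟩
    ∃ φ : (autC G (n - 1)) ≃
        {f : (G ⧸ H) →* ((⊤ : Subgroup G).lowerCentralSeries (n - 1)) //
          ∀ g : G, ∃ x ∈ (⊤ : Subgroup G).lowerCentralSeries (n - 2),
            (f (g : G ⧸ H) : G) = g⁻¹ * x⁻¹ * g * x},
      (∀ (f : autC G (n - 1)) (g : G),
          ((φ f).1 (g : G ⧸ H) : G) = g⁻¹ * (f : MulAut G) g) ∧
      (∀ (f₁ f₂ : autC G (n - 1)) (x : G ⧸ H),
          ((φ (f₁ * f₂)).1 x : G) = ((φ f₁).1 x : G) * ((φ f₂).1 x : G)) := by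
  haveI : H.Normal := ⟨fun a ha g => by
    rw [(Subgroup.mem_center_iff.mp (hH ha)) g, mul_inv_cancel_right]
    exact ha⟩
  have hsucc : n - 1 = (n - 2) + 1 := by omega
  have hnn : n - 1 - 1 = n - 2 := by omega
  have hKc : (⊤ : Subgroup G).lowerCentralSeries (n - 1) ≤ Subgroup.center G := hγ.trans hH
  -- elements g⁻¹ * f g lie in γ_n = lcs (n-1)
  have hmem : ∀ f : MulAut G, f ∈ autC G (n - 1) → ∀ g : G,
      g⁻¹ * f g ∈ (⊤ : Subgroup G).lowerCentralSeries (n - 1) := by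
    intro f hf g
    obtain ⟨x, hx, he⟩ := hf g
    rw [hnn] at hx
    open scoped commutatorElement in have he2 : g⁻¹ * f g = ⁅x⁻¹, g⁻¹⁆⁻¹ := by rw [he, commutatorElement_def]; group
    rw [he2, hsucc, Subgroup.lowerCentralSeries_succ]
    exact Subgroup.inv_mem _
      (Subgroup.commutator_mem_commutator (Subgroup.inv_mem _ hx) (Subgroup.mem_top _))
  -- class preserving automorphisms fix central elements
  have hfix : ∀ f : MulAut G, f ∈ autC G (n - 1) → ∀ h ∈ Subgroup.center G, f h = h := by
    intro f hf h hc
    obtain ⟨x, hx, he⟩ := hf h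
    have hxc := Subgroup.mem_center_iff.mp hc x⁻¹
    rw [he, hxc, mul_assoc, inv_mul_cancel, mul_one]
  have hcen : ∀ a ∈ (⊤ : Subgroup G).lowerCentralSeries (n - 1), ∀ b : G, a * b = b * a :=
    fun a ha b => (Subgroup.mem_center_iff.mp (hKc ha) b).symm
  -- the homomorphism G →* γ_n associated to f
  let ψ : autC G (n - 1) → (G →* ((⊤ : Subgroup G).lowerCentralSeries (n - 1))) := fun f =>
    { toFun := fun g => ⟨g⁻¹ * (f : MulAut G) g, hmem f f.2 g⟩
      map_one' := Subtype.ext (by simp)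
      map_mul' := fun a b => Subtype.ext (by
        show (a * b)⁻¹ * (f : MulAut G) (a * b)
            = (a⁻¹ * (f : MulAut G) a) * (b⁻¹ * (f : MulAut G) b)
        have h2 : b⁻¹ * (a⁻¹ * (f : MulAut G) a) = (a⁻¹ * (f : MulAut G) a) * b⁻¹ :=
          (hcen _ (hmem f f.2 a) b⁻¹).symm
        calc (a * b)⁻¹ * (f : MulAut G) (a * b)
            = b⁻¹ * (a⁻¹ * (f : MulAut G) a) * (f : MulAut G) b := by
              rw [map_mul]; group
          _ = (a⁻¹ * (f : MulAut G) a) * b⁻¹ * (f : MulAut G) b := by rw [h2]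
          _ = _ := by group) }
  have hker : ∀ f : autC G (n - 1), H ≤ (ψ f).ker := by
    intro f h hh
    have : (f : MulAut G) h = h := hfix f f.2 h (hH hh)
    exact Subtype.ext (by show h⁻¹ * (f : MulAut G) h = 1; rw [this, inv_mul_cancel])
  -- forward map
  let toα : (autC G (n - 1)) →
      {f : (G ⧸ H) →* ((⊤ : Subgroup G).lowerCentralSeries (n - 1)) //
        ∀ g : G, ∃ x ∈ (⊤ : Subgroup G).lowerCentralSeries (n - 2),
          (f (g : G ⧸ H) : G) = g⁻¹ * x⁻¹ * g * x} := fun f =>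
    ⟨QuotientGroup.lift H (ψ f) (hker f), by
      intro g
      obtain ⟨x, hx, he⟩ := f.2 g
      rw [hnn] at hx
      refine ⟨x, hx, ?_⟩
      show ((ψ f g : (⊤ : Subgroup G).lowerCentralSeries (n - 1)) : G) = _
      show g⁻¹ * (f : MulAut G) g = _
      rw [he]; group⟩
  -- inverse construction
  let Fhom : {f : (G ⧸ H) →* ((⊤ : Subgroup G).lowerCentralSeries (n - 1)) //
        ∀ g : G, ∃ x ∈ (⊤ : Subgroup G).lowerCentralSeries (n - 2),
          (f (g : G ⧸ H) : G) = g⁻¹ * x⁻¹ * g * x} → (G →* G) := fun α =>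
    { toFun := fun g => g * ((α.1 (g : G ⧸ H)) : G)
      map_one' := by simp
      map_mul' := fun a b => by
        show (a * b) * ((α.1 ((a * b : G) : G ⧸ H)) : G)
            = (a * ((α.1 (a : G ⧸ H)) : G)) * (b * ((α.1 (b : G ⧸ H)) : G))
        have hmul : ((α.1 ((a * b : G) : G ⧸ H)) : G)
            = ((α.1 (a : G ⧸ H)) : G) * ((α.1 (b : G ⧸ H)) : G) := by
          rw [show ((a * b : G) : G ⧸ H) = (a : G ⧸ H) * (b : G ⧸ H) from rfl, map_mul]
          rfl
        have hc : ((α.1 (a : G ⧸ H)) : G) * b = b * ((α.1 (a : G ⧸ H)) : G) :=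
          hcen _ (α.1 (a : G ⧸ H)).2 b
        rw [hmul]
        calc a * b * (((α.1 (a : G ⧸ H)) : G) * ((α.1 (b : G ⧸ H)) : G))
            = a * (b * ((α.1 (a : G ⧸ H)) : G)) * ((α.1 (b : G ⧸ H)) : G) := by group
          _ = a * (((α.1 (a : G ⧸ H)) : G) * b) * ((α.1 (b : G ⧸ H)) : G) := by rw [hc]
          _ = _ := by group }
  have hbij : ∀ α, Function.Bijective (Fhom α) := by
    intro α
    apply Finite.injective_iff_bijective.mp
    rw [injective_iff_map_eq_one]
    intro g hg
    have hgval : Fhom α g = g * ((α.1 (g : G ⧸ H)) : G) := rfl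
    rw [hgval] at hg
    have hgK : g ∈ (⊤ : Subgroup G).lowerCentralSeries (n - 1) := by
      have hgeq : g = ((α.1 (g : G ⧸ H)) : G)⁻¹ := eq_inv_of_mul_eq_one_left hg
      rw [hgeq]
      exact Subgroup.inv_mem _ (α.1 (g : G ⧸ H)).2
    have hq : (g : G ⧸ H) = 1 := (QuotientGroup.eq_one_iff g).mpr (hγ hgK)
    have hone : ((α.1 (g : G ⧸ H)) : G) = 1 := by rw [hq, map_one]; rfl
    rw [hone, mul_one] at hg
    exact hg
  let invα : {f : (G ⧸ H) →* ((⊤ : Subgroup G).lowerCentralSeries (n - 1)) //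
        ∀ g : G, ∃ x ∈ (⊤ : Subgroup G).lowerCentralSeries (n - 2),
          (f (g : G ⧸ H) : G) = g⁻¹ * x⁻¹ * g * x} → (autC G (n - 1)) := fun α =>
    ⟨MulEquiv.ofBijective (Fhom α) (hbij α), by
      intro g
      obtain ⟨x, hx, he⟩ := α.2 g
      rw [← hnn] at hx
      refine ⟨x, hx, ?_⟩
      show Fhom α g = x⁻¹ * g * x
      show g * ((α.1 (g : G ⧸ H)) : G) = x⁻¹ * g * x
      rw [he]; group⟩
  refine ⟨{ toFun := toα, invFun := invα, left_inv := ?_, right_inv := ?_ }, ?_, ?_⟩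
  · intro f
    apply Subtype.ext
    apply MulEquiv.ext
    intro g
    show g * (((toα f).1 (g : G ⧸ H)) : G) = (f : MulAut G) g
    show g * (g⁻¹ * (f : MulAut G) g) = (f : MulAut G) g
    group
  · intro α
    apply Subtype.ext
    apply MonoidHom.ext
    intro q
    refine QuotientGroup.induction_on q fun g => ?_
    apply Subtype.ext
    show g⁻¹ * (g * ((α.1 (g : G ⧸ H)) : G)) = ((α.1 (g : G ⧸ H)) : G)
    group
  · intro f g
    rfl
  · intro f₁ f₂ x
    refine QuotientGroup.induction_on x fun g => ?_
    show g⁻¹ * (f₁ : MulAut G) ((f₂ : MulAut G) g)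
        = (g⁻¹ * (f₁ : MulAut G) g) * (g⁻¹ * (f₂ : MulAut G) g)
    have hbK : g⁻¹ * (f₂ : MulAut G) g ∈ Subgroup.center G := hKc (hmem _ f₂.2 g)
    have h2 : (f₂ : MulAut G) g = g * (g⁻¹ * (f₂ : MulAut G) g) := by group
    set b := g⁻¹ * (f₂ : MulAut G) g with hbdef
    rw [h2, map_mul, hfix _ f₁.2 b hbK]
    group
end

section
/- Let n ≥ 2 and let G be a finite nilpotent group of nilpotency class n. Then Aut_c^{n-1}(G) is isomorphic as a group to Hom_c(G/Z(G), γ_n(G)). -/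
open scoped commutatorElement

/-- for `n ≥ 2` and a finite nilpotent group `G` of nilpotency class
exactly `n`, `Aut_c^{n-1}(G)` is isomorphic as a group to
`Hom_c(G/Z(G), γ_n(G))` (with pointwise multiplication). -/
theorem statement7 {G : Type*} [Group G] [Finite G] (n : ℕ) (hn : 2 ≤ n)
    (hnil : (⊤ : Subgroup G).lowerCentralSeries n = ⊥)
    (hclass : (⊤ : Subgroup G).lowerCentralSeries (n - 1) ≠ ⊥) :
    ∃ φ : (autC G (n - 1)) ≃
        {f : (G ⧸ Subgroup.center G) →* ((⊤ : Subgroup G).lowerCentralSeries (n - 1)) //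
          ∀ g : G, ∃ x ∈ (⊤ : Subgroup G).lowerCentralSeries (n - 2),
            (f (g : G ⧸ Subgroup.center G) : G) = g⁻¹ * x⁻¹ * g * x},
      ∀ (f₁ f₂ : autC G (n - 1)) (x : G ⧸ Subgroup.center G),
        ((φ (f₁ * f₂)).1 x : G) = ((φ f₁).1 x : G) * ((φ f₂).1 x : G) := by
  classical
  -- γ_n(G) = (⊤ : Subgroup G).lowerCentralSeries (n-1) is central
  have hcent : (⊤ : Subgroup G).lowerCentralSeries (n-1) ≤ Subgroup.center G := by
    intro a ha
    rw [Subgroup.mem_center_iff]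
    intro g
    have h1 : ⁅a, g⁆ ∈ (⊤ : Subgroup G).lowerCentralSeries n := by
      rw [show n = n - 1 + 1 by omega, Subgroup.lowerCentralSeries_succ]
      exact Subgroup.commutator_mem_commutator ha (Subgroup.mem_top g)
    rw [hnil, Subgroup.mem_bot] at h1
    exact (commutatorElement_eq_one_iff_mul_comm.mp h1).symm
  have hn1 : n - 1 = n - 2 + 1 := by omega
  -- membership of g⁻¹ * f g in γ_n(G)
  have hmem : ∀ f : MulAut G, f ∈ autC G (n-1) → ∀ g : G,
      g⁻¹ * f g ∈ (⊤ : Subgroup G).lowerCentralSeries (n-1) := by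
    intro f hf g
    obtain ⟨x, hx, hx2⟩ := hf g
    rw [hx2, show g⁻¹ * (x⁻¹ * g * x) = ⁅g⁻¹, x⁻¹⁆ by group, hn1]
    show ⁅g⁻¹, x⁻¹⁆ ∈ ⁅(⊤ : Subgroup G).lowerCentralSeries (n-2), ⊤⁆
    rw [Subgroup.commutator_comm]
    exact Subgroup.commutator_mem_commutator (Subgroup.mem_top _) (Subgroup.inv_mem _ hx)
  -- class preserving automorphisms fix the center
  have hfix : ∀ f : MulAut G, f ∈ autC G (n-1) → ∀ z ∈ Subgroup.center G, f z = z := by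
    intro f hf z hz
    obtain ⟨x, hx, hx2⟩ := hf z
    rw [hx2, show x⁻¹ * z * x = x⁻¹ * (z * x) by group,
      ← Subgroup.mem_center_iff.mp hz x]
    group
  -- the homomorphism G →* γ_n(G) associated to f
  have Fdef : ∀ f : autC G (n-1), ∃ F : G →* ((⊤ : Subgroup G).lowerCentralSeries (n-1)),
      ∀ g : G, (F g : G) = g⁻¹ * f.1 g := by
    intro f
    refine ⟨{ toFun := fun g => ⟨g⁻¹ * f.1 g, hmem f.1 f.2 g⟩
              map_one' := by ext; simp
              map_mul' := ?_ }, fun g => rfl⟩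
    intro a b
    ext
    show (a*b)⁻¹ * f.1 (a*b) = (a⁻¹ * f.1 a) * (b⁻¹ * f.1 b)
    have hc := Subgroup.mem_center_iff.mp (hcent (hmem f.1 f.2 a)) b⁻¹
    calc (a*b)⁻¹ * f.1 (a*b) = (b⁻¹ * (a⁻¹ * f.1 a)) * f.1 b := by
          rw [map_mul]; group
      _ = (a⁻¹ * f.1 a * b⁻¹) * f.1 b := by rw [hc]
      _ = (a⁻¹ * f.1 a) * (b⁻¹ * f.1 b) := by group
  choose F hF using Fdef
  -- descend to the quotient
  have hker : ∀ f : autC G (n-1), ∀ z ∈ Subgroup.center G, F f z = 1 := by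
    intro f z hz
    ext
    rw [hF f z, hfix f.1 f.2 z hz]
    simp
  let Fbar : autC G (n-1) → ((G ⧸ Subgroup.center G) →* ((⊤ : Subgroup G).lowerCentralSeries (n-1))) :=
    fun f => QuotientGroup.lift (Subgroup.center G) (F f) (hker f)
  have hFbar : ∀ f : autC G (n-1), ∀ g : G,
      ((Fbar f) (g : G ⧸ Subgroup.center G) : G) = g⁻¹ * f.1 g := fun f g => hF f g
  -- the forward map condition
  have hcond : ∀ f : autC G (n-1), ∀ g : G, ∃ x ∈ (⊤ : Subgroup G).lowerCentralSeries (n - 2),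
      ((Fbar f) (g : G ⧸ Subgroup.center G) : G) = g⁻¹ * x⁻¹ * g * x := by
    intro f g
    obtain ⟨x, hx, hx2⟩ := f.2 g
    exact ⟨x, hx, by rw [hFbar f g, hx2]; group⟩
  -- the inverse map
  have inv_def : ∀ F₀ : {f : (G ⧸ Subgroup.center G) →* ((⊤ : Subgroup G).lowerCentralSeries (n - 1)) //
          ∀ g : G, ∃ x ∈ (⊤ : Subgroup G).lowerCentralSeries (n - 2),
            (f (g : G ⧸ Subgroup.center G) : G) = g⁻¹ * x⁻¹ * g * x},
      ∃ f : autC G (n-1), ∀ g : G, f.1 g = g * ((F₀.1 (g : G ⧸ Subgroup.center G)) : G) := by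
    intro F₀
    have hcen : ∀ g : G, ((F₀.1 (g : G ⧸ Subgroup.center G)) : G) ∈ Subgroup.center G :=
      fun g => hcent (F₀.1 _).2
    have hm : ∀ a b : G, (a * b) * ((F₀.1 ((a*b : G) : G ⧸ Subgroup.center G)) : G)
        = (a * ((F₀.1 (a : G ⧸ Subgroup.center G)) : G))
          * (b * ((F₀.1 (b : G ⧸ Subgroup.center G)) : G)) := by
      intro a b
      rw [show ((a*b : G) : G ⧸ Subgroup.center G) = (a : G ⧸ Subgroup.center G) * b from rfl,
        map_mul]
      push_cast
      have hbc := Subgroup.mem_center_iff.mp (hcen a) b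
      calc a * b * (((F₀.1 (a : G ⧸ Subgroup.center G)) : G)
              * ((F₀.1 (b : G ⧸ Subgroup.center G)) : G))
          = a * (b * ((F₀.1 (a : G ⧸ Subgroup.center G)) : G))
              * ((F₀.1 (b : G ⧸ Subgroup.center G)) : G) := by group
        _ = a * (((F₀.1 (a : G ⧸ Subgroup.center G)) : G) * b)
              * ((F₀.1 (b : G ⧸ Subgroup.center G)) : G) := by rw [hbc]
        _ = _ := by group
    let Ψ : G →* G :=
      { toFun := fun g => g * ((F₀.1 (g : G ⧸ Subgroup.center G)) : G)
        map_one' := by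
          show (1 : G) * ((F₀.1 ((1:G) : G ⧸ Subgroup.center G)) : G) = 1
          rw [show ((1 : G) : G ⧸ Subgroup.center G) = 1 from rfl, map_one]
          simp
        map_mul' := hm }
    have key : ∀ g : G, Ψ g = 1 → g = 1 := by
      intro g hg
      have hg' : g = ((F₀.1 (g : G ⧸ Subgroup.center G)) : G)⁻¹ := by
        rw [eq_inv_iff_mul_eq_one]; exact hg
      have hgc : g ∈ Subgroup.center G := hg' ▸ Subgroup.inv_mem _ (hcen g)
      have h2 : ((g : G) : G ⧸ Subgroup.center G) = 1 := (QuotientGroup.eq_one_iff g).mpr hgc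
      have : Ψ g = g * ((F₀.1 (1 : G ⧸ Subgroup.center G)) : G) := by rw [← h2]; rfl
      rw [this, map_one] at hg
      simpa using hg
    have hinj : Function.Injective Ψ := (injective_iff_map_eq_one Ψ).mpr key
    let f' : MulAut G := MulEquiv.ofBijective Ψ (Finite.injective_iff_bijective.mp hinj)
    have hf'app : ∀ g : G, f' g = g * ((F₀.1 (g : G ⧸ Subgroup.center G)) : G) :=
      fun g => rfl
    have hf'mem : f' ∈ autC G (n-1) := by
      intro g
      obtain ⟨x, hx, hx2⟩ := F₀.2 g
      refine ⟨x, hx, ?_⟩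
      rw [hf'app g, hx2]
      group
    exact ⟨⟨f', hf'mem⟩, hf'app⟩
  choose inv hinv using inv_def
  refine ⟨⟨fun f => ⟨Fbar f, hcond f⟩, inv, ?_, ?_⟩, ?_⟩
  · -- left inverse
    intro f
    apply Subtype.ext
    apply MulEquiv.ext
    intro g
    have h1 := hinv ⟨Fbar f, hcond f⟩ g
    rw [h1, hFbar f g]
    group
  · -- right inverse
    intro F₀
    apply Subtype.ext
    apply MonoidHom.ext
    intro q
    induction q using QuotientGroup.induction_on with
    | H g =>
      apply Subtype.ext
      rw [hFbar (inv F₀) g, hinv F₀ g]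
      group
  · -- multiplicativity
    intro f₁ f₂ x
    induction x using QuotientGroup.induction_on with
    | H g =>
      show ((Fbar (f₁ * f₂)) _ : G) = ((Fbar f₁) _ : G) * ((Fbar f₂) _ : G)
      rw [hFbar, hFbar, hFbar]
      have hcmem : g⁻¹ * f₂.1 g ∈ Subgroup.center G := hcent (hmem f₂.1 f₂.2 g)
      have h12 : (f₁ * f₂).1 g = f₁.1 (f₂.1 g) := rfl
      have h2 : f₁.1 (f₂.1 g) = f₁.1 g * (g⁻¹ * f₂.1 g) := by
        conv_lhs => rw [show f₂.1 g = g * (g⁻¹ * f₂.1 g) by group]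
        rw [map_mul, hfix f₁.1 f₁.2 _ hcmem]
      rw [h12, h2]
      group
end

section
/- Let p be a prime, let G be a finite non-abelian p-group, and let n ≥ 2. If Aut_c^{n-1}(G) = Autcent(G), then G is purely non-abelian. -/
section Aux

lemma exists_pow_prime_eq_one' {p : ℕ} {H : Type*} [Group H] (hp : p.Prime)
    (hH : IsPGroup p H) [Nontrivial H] : ∃ c : H, c ≠ 1 ∧ c ^ p = 1 := by
  classical
  obtain ⟨a, ha⟩ := exists_ne (1 : H)
  have hex : ∃ k, a ^ p ^ k = 1 := hH a
  set m := Nat.find hex with hmdef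
  have hm : a ^ p ^ m = 1 := Nat.find_spec hex
  have hm0 : m ≠ 0 := by
    intro h0
    rw [h0, pow_zero, pow_one] at hm
    exact ha hm
  refine ⟨a ^ p ^ (m - 1), ?_, ?_⟩
  · intro hc
    exact Nat.find_min hex (Nat.sub_lt (Nat.pos_of_ne_zero hm0) one_pos) hc
  · rw [← pow_mul, ← pow_succ, Nat.sub_add_cancel (Nat.one_le_iff_ne_zero.mpr hm0)]
    exact hm

lemma commutator_ne_top' {K : Type*} [Group K] [Nontrivial K]
    (hnil : Group.IsNilpotent K) : commutator K ≠ ⊤ := by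
  intro htop
  have hall : ∀ n, (⊤ : Subgroup K).lowerCentralSeries n = ⊤ := by
    intro n
    induction n with
    | zero => rfl
    | succ n ih =>
      rw [show (⊤ : Subgroup K).lowerCentralSeries (n+1) = ⁅(⊤ : Subgroup K).lowerCentralSeries n, ⊤⁆ from rfl, ih,
        ← commutator_def, htop]
  obtain ⟨n, hn⟩ := nilpotent_iff_lowerCentralSeries.mp hnil
  obtain ⟨x, hx⟩ := exists_ne (1 : K)
  have h2 : (⊤ : Subgroup K) = ⊥ := (hall n).symm.trans hn
  exact hx (Subgroup.mem_bot.mp (h2 ▸ Subgroup.mem_top x))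

lemma exists_functional_zmod' {p : ℕ} [Fact p.Prime] {Q B : Type*} [AddCommGroup Q]
    [AddCommGroup B] [Module (ZMod p) Q] [Nontrivial Q] {b : B} (hb : p • b = 0) :
    ∃ (f : Q →+ B) (q : Q), f q = b := by
  haveI : NeZero p := ⟨(Fact.out (p := p.Prime)).pos.ne'⟩
  classical
  let bas := Module.Basis.ofVectorSpace (ZMod p) Q
  obtain ⟨i⟩ := bas.index_nonempty
  let c : Q →+ ZMod p := (bas.coord i).toAddMonoidHom
  let q₀ : Q := bas.repr.symm (Finsupp.single i 1)
  have hbz : (zmultiplesHom B) b (p : ℤ) = 0 := by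
    show (p : ℤ) • b = 0
    rw [natCast_zsmul]
    exact hb
  let g : ZMod p →+ B := ZMod.lift p ⟨(zmultiplesHom B) b, hbz⟩
  refine ⟨g.comp c, q₀, ?_⟩
  have h1 : c q₀ = 1 := by
    show (bas.coord i) (bas.repr.symm (Finsupp.single i 1)) = 1
    rw [Module.Basis.coord_repr_symm]
    simp
  show g (c q₀) = b
  rw [h1]
  have h2 : ((1 : ℤ) : ZMod p) = 1 := by push_cast; rfl
  rw [← h2, ZMod.lift_coe]
  show (1 : ℤ) • b = b
  simp

lemma exists_functional_add' {p : ℕ} (hp : p.Prime) {Q B : Type*} [AddCommGroup Q]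
    [AddCommGroup B] [Nontrivial Q] (hQ : ∀ x : Q, p • x = 0) {b : B} (hb : p • b = 0) :
    ∃ (f : Q →+ B) (q : Q), f q = b := by
  haveI : Fact p.Prime := ⟨hp⟩
  letI : Module (ZMod p) Q := AddCommGroup.zmodModule hQ
  exact exists_functional_zmod' hb

lemma exists_functional_mul' {p : ℕ} (hp : p.Prime) {Q B : Type*} [CommGroup Q] [CommGroup B]
    [Nontrivial Q] (hQ : ∀ q : Q, q ^ p = 1) {b : B} (hb : b ^ p = 1) :
    ∃ (f : Q →* B) (q : Q), f q = b := by
  have h1 : ∀ x : Additive Q, p • x = 0 := by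
    intro x
    calc p • x = Additive.ofMul (Additive.toMul x ^ p) := by rw [ofMul_pow]; rfl
    _ = 0 := by rw [hQ]; rfl
  have h2 : p • Additive.ofMul b = 0 := by
    calc p • Additive.ofMul b = Additive.ofMul (b ^ p) := by rw [ofMul_pow]
    _ = 0 := by rw [hb]; rfl
  obtain ⟨f, q, hq⟩ := exists_functional_add' hp h1 h2
  refine ⟨MonoidHom.toAdditive.symm f, Additive.toMul q, ?_⟩
  show Additive.toMul (f (Additive.ofMul (Additive.toMul q))) = b
  rw [show Additive.ofMul (Additive.toMul q) = q from rfl, hq]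
  rfl

lemma exists_nontrivial_hom' {p : ℕ} (hp : p.Prime) {K B : Type*} [Group K] [CommGroup B]
    [Finite K] [Finite B] [Nontrivial K] [Nontrivial B]
    (hK : IsPGroup p K) (hB : IsPGroup p B) :
    ∃ (φ : K →* B) (k : K), φ k ≠ 1 := by
  haveI : Fact p.Prime := ⟨hp⟩
  classical
  haveI : Group.IsNilpotent K := hK.isNilpotent
  have hA : IsPGroup p (Abelianization K) := hK.to_quotient (commutator K)
  haveI : Nontrivial (Abelianization K) := by
    obtain ⟨x, hx⟩ : ∃ x, x ∉ commutator K := by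
      by_contra hc
      push_neg at hc
      exact commutator_ne_top' ‹_› ((Subgroup.eq_top_iff' _).mpr hc)
    exact ⟨Abelianization.of x, 1, fun hh => hx ((QuotientGroup.eq_one_iff x).mp hh)⟩
  set R : Subgroup (Abelianization K) := (powMonoidHom p : Abelianization K →* _).range with hR
  have hRtop : R ≠ ⊤ := by
    intro htop
    obtain ⟨c, hc1, hcp⟩ := exists_pow_prime_eq_one' hp hA
    have hsurj : Function.Surjective (powMonoidHom p : Abelianization K →* _) :=
      MonoidHom.range_eq_top.mp htop
    have hinj := (Finite.injective_iff_surjective).mpr hsurj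
    exact hc1 (hinj (show (powMonoidHom p) c = (powMonoidHom p) 1 by
      simpa [powMonoidHom] using hcp))
  haveI : Nontrivial (Abelianization K ⧸ R) := by
    obtain ⟨a, ha⟩ : ∃ a, a ∉ R := by
      by_contra hc; push_neg at hc; exact hRtop ((Subgroup.eq_top_iff' _).mpr hc)
    exact ⟨QuotientGroup.mk a, 1, fun hh => ha ((QuotientGroup.eq_one_iff a).mp hh)⟩
  have hq : ∀ q : Abelianization K ⧸ R, q ^ p = 1 := by
    intro q
    obtain ⟨a, rfl⟩ := QuotientGroup.mk'_surjective R q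
    rw [← map_pow]
    exact (QuotientGroup.eq_one_iff _).mpr ⟨a, rfl⟩
  obtain ⟨b₀, hb01, hb0p⟩ := exists_pow_prime_eq_one' hp hB
  obtain ⟨f, q, hfq⟩ := exists_functional_mul' hp hq hb0p
  obtain ⟨a, ha⟩ := QuotientGroup.mk'_surjective R q
  obtain ⟨k, hk⟩ : ∃ k, Abelianization.of k = a := Quotient.inductionOn' a (fun z => ⟨z, rfl⟩)
  refine ⟨(f.comp (QuotientGroup.mk' R)).comp Abelianization.of, k, ?_⟩
  show f ((QuotientGroup.mk' R) (Abelianization.of k)) ≠ 1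
  rw [hk, ha, hfq]
  exact hb01

end Aux

/-- if `G` is a finite non-abelian `p`-group, `n ≥ 2`, and
`Aut_c^{n-1}(G) = Autcent(G)`, then `G` is purely non-abelian. -/
theorem statement9 {p : ℕ} (hp : p.Prime) {G : Type u} [Group G] [Finite G]
    (hpG : IsPGroup p G) (hna : ¬ ∀ a b : G, a * b = b * a)
    (n : ℕ) (hn : 2 ≤ n)
    (h : autC G (n - 1) = autM (Subgroup.center G)) :
    PurelyNonabelian G := by
  rintro ⟨K, B, _, _, hB, ⟨e⟩⟩
  haveI : Finite (K × B) := Finite.of_equiv G e.toEquiv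
  haveI : Finite K := Finite.of_surjective (Prod.fst : K × B → K) (fun k => ⟨(k, 1), rfl⟩)
  haveI : Finite B := Finite.of_surjective (Prod.snd : K × B → B) (fun b => ⟨(1, b), rfl⟩)
  have hKB : IsPGroup p (K × B) := hpG.of_equiv e
  have hK : IsPGroup p K := hKB.of_surjective (MonoidHom.fst K B) (fun k => ⟨(k, 1), rfl⟩)
  have hBp : IsPGroup p B := hKB.of_surjective (MonoidHom.snd K B) (fun b => ⟨(1, b), rfl⟩)
  haveI : Nontrivial K := by
    rcases subsingleton_or_nontrivial K with hs | hs
    · exfalso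
      apply hna
      intro a b
      apply e.injective
      rw [map_mul, map_mul]
      ext
      · exact Subsingleton.elim _ _
      · exact mul_comm _ _
    · exact hs
  obtain ⟨φ, k₀, hk₀⟩ := exists_nontrivial_hom' hp hK hBp
  let ψ : (K × B) ≃* (K × B) :=
  { toFun := fun x => (x.1, x.2 * φ x.1)
    invFun := fun x => (x.1, x.2 * (φ x.1)⁻¹)
    left_inv := by intro x; simp [mul_assoc]
    right_inv := by intro x; simp [mul_assoc]
    map_mul' := by
      intro x y
      refine Prod.ext rfl ?_
      show (x.2 * y.2) * φ (x.1 * y.1) = (x.2 * φ x.1) * (y.2 * φ y.1)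
      rw [map_mul]
      exact mul_mul_mul_comm _ _ _ _ }
  let α : MulAut G := (e.trans ψ).trans e.symm
  have hαM : α ∈ autM (Subgroup.center G) := by
    intro g
    have hψ : e (α g) = ((e g).1, (e g).2 * φ (e g).1) := by
      show e (e.symm (ψ (e g))) = _
      rw [MulEquiv.apply_symm_apply]
      rfl
    have hz : e (g⁻¹ * α g) = (1, φ (e g).1) := by
      rw [map_mul, map_inv, hψ]
      refine Prod.ext ?_ ?_
      · show (e g).1⁻¹ * (e g).1 = 1
        group
      · show (e g).2⁻¹ * ((e g).2 * φ (e g).1) = φ (e g).1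
        group
    rw [Subgroup.mem_center_iff]
    intro g'
    apply e.injective
    rw [map_mul e g' (g⁻¹ * α g), map_mul e (g⁻¹ * α g) g', hz]
    refine Prod.ext ?_ ?_
    · show (e g').1 * 1 = 1 * (e g').1
      rw [one_mul, mul_one]
    · show (e g').2 * φ (e g).1 = φ (e g).1 * (e g').2
      exact mul_comm _ _
  have hαC : α ∈ autC G (n - 1) := by rw [h]; exact hαM
  obtain ⟨x, -, hx⟩ := hαC (e.symm (k₀, 1))
  have h1 : α (e.symm (k₀, 1)) = e.symm (k₀, φ k₀) := by
    show e.symm (ψ (e (e.symm (k₀, 1)))) = _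
    rw [MulEquiv.apply_symm_apply]
    show e.symm (k₀, 1 * φ k₀) = _
    rw [one_mul]
  rw [h1] at hx
  have h2 : e (e.symm (k₀, φ k₀)) = e (x⁻¹ * e.symm (k₀, 1) * x) := congrArg e hx
  rw [MulEquiv.apply_symm_apply, map_mul, map_mul, map_inv, MulEquiv.apply_symm_apply] at h2
  have h3 := congrArg Prod.snd h2
  exact hk₀ (by simpa using h3)
end

section
/- Let p be a prime, let G be a finite non-abelian p-group, and let n ≥ 2. If Aut_c^{n-1}(G) = Autcent(G), then γ_n(G) ⊆ Z(G) and d(γ_n(G)) = d(Z(G)), where d denotes the minimal number of generators. -/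
open scoped commutatorElement IsMulCommutative

section AuxRank

variable {p : ℕ}

lemma aux_exists_pow_eq_one {B : Type*} [Group B] [Finite B] (hp : p.Prime)
    (hB : IsPGroup p B) (hnt : Nontrivial B) : ∃ b : B, b ≠ 1 ∧ b ^ p = 1 := by
  haveI : Fact p.Prime := ⟨hp⟩
  cases nonempty_fintype B
  obtain ⟨m, hm⟩ := IsPGroup.iff_card.mp hB
  rw [Nat.card_eq_fintype_card] at hm
  have h1 : 1 < Fintype.card B := Fintype.one_lt_card
  have hdvd : p ∣ Fintype.card B := by
    rcases m with _ | m
    · rw [hm] at h1; simp at h1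
    · rw [hm]; exact dvd_pow_self p m.succ_ne_zero
  obtain ⟨b, hb⟩ := exists_prime_orderOf_dvd_card p hdvd
  refine ⟨b, ?_, ?_⟩
  · intro hb1
    rw [hb1, orderOf_one] at hb
    exact hp.ne_one hb.symm
  · rw [← hb]; exact pow_orderOf_eq_one b

lemma aux_subsingleton_of_pow_surj {B : Type*} [Group B] [Finite B] (hp : p.Prime)
    (hB : IsPGroup p B) (hs : ∀ b : B, ∃ c, c ^ p = b) : Subsingleton B := by
  by_contra hns
  have hnt : Nontrivial B := not_subsingleton_iff_nontrivial.mp hns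
  have hinj : Function.Injective (fun b : B => b ^ p) :=
    Finite.injective_iff_surjective.mpr (fun b => hs b)
  obtain ⟨b, hb1, hbp⟩ := aux_exists_pow_eq_one hp hB hnt
  exact hb1 (hinj (by simp [hbp]))

lemma aux_toAddSubgroup_top {V : Type*} [Group V] :
    Subgroup.toAddSubgroup (⊤ : Subgroup V) = ⊤ :=
  eq_top_iff.mpr fun x _ => Subgroup.mem_top (Additive.toMul x)

lemma aux_closure_additive {V : Type*} [Group V] (s : Set V) :
    Subgroup.toAddSubgroup (Subgroup.closure s) =
      AddSubgroup.closure (Additive.ofMul '' s) := by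
  apply le_antisymm
  · have h1 : Subgroup.closure s ≤
        Subgroup.toAddSubgroup.symm (AddSubgroup.closure (Additive.ofMul '' s)) := by
      refine (Subgroup.closure_le _).mpr ?_
      intro x hx
      show Additive.ofMul x ∈ AddSubgroup.closure (Additive.ofMul '' s)
      exact AddSubgroup.subset_closure ⟨x, hx, rfl⟩
    calc Subgroup.toAddSubgroup (Subgroup.closure s)
        ≤ Subgroup.toAddSubgroup (Subgroup.toAddSubgroup.symm
            (AddSubgroup.closure (Additive.ofMul '' s))) :=
          Subgroup.toAddSubgroup.monotone h1
      _ = AddSubgroup.closure (Additive.ofMul '' s) :=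
          Subgroup.toAddSubgroup.apply_symm_apply _
  · refine (AddSubgroup.closure_le _).mpr ?_
    rintro _ ⟨x, hx, rfl⟩
    show x ∈ Subgroup.closure s
    exact Subgroup.subset_closure hx

lemma aux_closure_top_iff {V : Type*} [Group V] (s : Set V) :
    Subgroup.closure s = ⊤ ↔ AddSubgroup.closure (Additive.ofMul '' s) = ⊤ := by
  rw [← aux_closure_additive]
  constructor
  · intro h; rw [h]; exact aux_toAddSubgroup_top
  · intro h
    apply Subgroup.toAddSubgroup.injective
    rw [h, aux_toAddSubgroup_top]

lemma aux_rank_additive {V : Type*} [Group V] [Finite V] :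
    AddGroup.rank (Additive V) = Group.rank V := by
  classical
  apply le_antisymm
  · obtain ⟨S, h1, h2⟩ := Group.rank_spec V
    have hclo : AddSubgroup.closure
        (↑(S.image (fun x => Additive.ofMul x)) : Set (Additive V)) = ⊤ := by
      rw [Finset.coe_image]
      exact (aux_closure_top_iff (↑S : Set V)).mp h2
    exact (AddGroup.rank_le hclo).trans (h1 ▸ Finset.card_image_le)
  · obtain ⟨S, h1, h2⟩ := AddGroup.rank_spec (Additive V)
    have hclo : Subgroup.closure
        (↑(S.image (fun x => Additive.toMul x)) : Set V) = ⊤ := by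
      rw [aux_closure_top_iff, Finset.coe_image, Set.image_image]
      simpa using h2
    exact (Group.rank_le hclo).trans (h1 ▸ Finset.card_image_le)

lemma aux_card_elementary {A : Type*} [AddCommGroup A] [Finite A] (hp : p.Prime)
    (hA : ∀ a : A, p • a = 0) : Nat.card A = p ^ AddGroup.rank A := by
  classical
  haveI : Fact p.Prime := ⟨hp⟩
  haveI : NeZero p := ⟨hp.ne_zero⟩
  haveI : Module (ZMod p) A := AddCommGroup.zmodModule hA
  haveI : Fintype A := Fintype.ofFinite A
  have hcard : Fintype.card A = p ^ Module.finrank (ZMod p) A := by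
    have := Module.card_eq_pow_finrank (K := ZMod p) (V := A)
    rwa [ZMod.card] at this
  have hrank : AddGroup.rank A = Module.finrank (ZMod p) A := by
    apply le_antisymm
    · haveI : Module.Finite (ZMod p) A := Module.Finite.of_finite
      let b := Module.finBasis (ZMod p) A
      have hsp : Submodule.span (ZMod p) (↑(Finset.univ.image b) : Set A) = ⊤ := by
        rw [Finset.coe_image, Finset.coe_univ, Set.image_univ]
        exact b.span_eq
      have hcl : AddSubgroup.closure (↑(Finset.univ.image b) : Set A) = ⊤ := by
        rw [AddSubgroup.eq_top_iff']
        intro x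
        have hle : Submodule.span (ZMod p) (↑(Finset.univ.image b) : Set A) ≤
            AddSubgroup.toZModSubmodule p
              (AddSubgroup.closure (↑(Finset.univ.image b) : Set A)) :=
          Submodule.span_le.mpr (fun y hy => AddSubgroup.subset_closure hy)
        exact (AddSubgroup.mem_toZModSubmodule p).mp (hle (hsp ▸ Submodule.mem_top))
      refine (AddGroup.rank_le hcl).trans (Finset.card_image_le.trans ?_)
      simp
    · obtain ⟨S, h1, h2⟩ := AddGroup.rank_spec A
      have hsp : Submodule.span (ZMod p) (↑S : Set A) = ⊤ := by
        rw [Submodule.eq_top_iff']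
        intro x
        have hle : AddSubgroup.closure (↑S : Set A) ≤
            (Submodule.span (ZMod p) (↑S : Set A)).toAddSubgroup :=
          (AddSubgroup.closure_le _).mpr Submodule.subset_span
        exact hle (h2 ▸ AddSubgroup.mem_top x)
      have h4 := finrank_span_finset_le_card (R := ZMod p) (M := A) S
      rw [Set.finrank, hsp] at h4
      have h5 : Module.finrank (ZMod p) (⊤ : Submodule (ZMod p) A) =
          Module.finrank (ZMod p) A :=
        (Submodule.topEquiv :
          (⊤ : Submodule (ZMod p) A) ≃ₗ[ZMod p] A).finrank_eq
      rw [h5] at h4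
      rw [← h1]
      exact h4
  rw [Nat.card_eq_fintype_card, hcard, hrank]

lemma aux_additive_torsion {V : Type*} [Group V] (hV : ∀ v : V, v ^ p = 1) :
    ∀ a : Additive V, p • a = 0 := by
  intro a
  have := hV (Additive.toMul a)
  calc p • a = p • Additive.ofMul (Additive.toMul a) := rfl
    _ = Additive.ofMul (Additive.toMul a ^ p) := (ofMul_pow p _).symm
    _ = 0 := by rw [this]; rfl

lemma aux_rank_quotient_pow {B : Type*} [CommGroup B] [Finite B] (hp : p.Prime)
    (hB : IsPGroup p B) :
    Group.rank (B ⧸ (powMonoidHom p : B →* B).range) = Group.rank B := by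
  classical
  set R := (powMonoidHom p : B →* B).range with hR
  apply le_antisymm
  · exact Group.rank_le_of_surjective (QuotientGroup.mk' R) (QuotientGroup.mk'_surjective R)
  · obtain ⟨S, h1, h2⟩ := Group.rank_spec (B ⧸ R)
    choose lf hlf using QuotientGroup.mk'_surjective R
    have hmap : Subgroup.map (QuotientGroup.mk' R)
        (Subgroup.closure (↑(S.image lf) : Set B)) = ⊤ := by
      rw [MonoidHom.map_closure, Finset.coe_image, Set.image_image]
      simp only [hlf]
      rw [Set.image_id']
      exact h2
    have hHtop : Subgroup.closure (↑(S.image lf) : Set B) = ⊤ := by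
      set H := Subgroup.closure (↑(S.image lf) : Set B) with hH
      have key : ∀ b : B, ∃ a ∈ H, ∃ c : B, b = a * c ^ p := by
        intro b
        have hmem : QuotientGroup.mk' R b ∈ Subgroup.map (QuotientGroup.mk' R) H := by
          rw [hmap]; trivial
        obtain ⟨a, ha, heq⟩ := hmem
        have hmem2 : a⁻¹ * b ∈ R := by
          have : a⁻¹ * b ∈ (QuotientGroup.mk' R).ker := by
            rw [MonoidHom.mem_ker, map_mul, map_inv, heq]
            simp
          rwa [QuotientGroup.ker_mk'] at this
        obtain ⟨c, hc⟩ := hmem2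
        refine ⟨a, ha, c, ?_⟩
        have hc' : c ^ p = a⁻¹ * b := hc
        rw [hc']
        group
      have hsurj : ∀ w : B ⧸ H, ∃ u, u ^ p = w := by
        intro w
        obtain ⟨b, rfl⟩ := QuotientGroup.mk'_surjective H w
        obtain ⟨a, ha, c, hc⟩ := key b
        refine ⟨QuotientGroup.mk' H c, ?_⟩
        rw [← map_pow, hc, map_mul]
        have ha1 : QuotientGroup.mk' H a = 1 := (QuotientGroup.eq_one_iff a).mpr ha
        rw [ha1, one_mul]
      have hsub : Subsingleton (B ⧸ H) :=
        aux_subsingleton_of_pow_surj hp (hB.to_quotient H) hsurj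
      rw [Subgroup.eq_top_iff']
      intro b
      have hb1 : QuotientGroup.mk' H b = 1 := Subsingleton.elim _ _
      exact (QuotientGroup.eq_one_iff b).mp hb1
    rw [← h1]
    exact (Group.rank_le hHtop).trans Finset.card_image_le

lemma aux_card_pker {B : Type*} [CommGroup B] [Finite B] (hp : p.Prime) (hB : IsPGroup p B) :
    Nat.card {b : B // b ^ p = 1} = p ^ Group.rank B := by
  classical
  set φ := (powMonoidHom p : B →* B) with hφ
  set R := φ.range with hR
  have e0 : Nat.card {b : B // b ^ p = 1} = Nat.card φ.ker := by
    apply Nat.card_congr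
    apply Equiv.subtypeEquivRight
    intro b
    rw [MonoidHom.mem_ker, hφ, powMonoidHom_apply]
  have h1 := Subgroup.card_eq_card_quotient_mul_card_subgroup (R : Subgroup B)
  have h2 := Subgroup.card_eq_card_quotient_mul_card_subgroup (φ.ker : Subgroup B)
  have h3 : Nat.card (B ⧸ φ.ker) = Nat.card R :=
    Nat.card_congr (QuotientGroup.quotientKerEquivRange φ).toEquiv
  have hq : Nat.card (B ⧸ R) = Nat.card φ.ker := by
    have hpos : 0 < Nat.card R := Nat.card_pos
    apply Nat.eq_of_mul_eq_mul_left hpos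
    calc Nat.card R * Nat.card (B ⧸ R) = Nat.card B := by rw [h1]; ring
      _ = Nat.card R * Nat.card ↥φ.ker := by rw [h2, h3]
  have hVm : ∀ v : B ⧸ R, v ^ p = 1 := by
    intro v
    obtain ⟨b, rfl⟩ := QuotientGroup.mk'_surjective R v
    rw [← map_pow]
    exact (QuotientGroup.eq_one_iff _).mpr (MonoidHom.mem_range.mpr ⟨b, rfl⟩)
  have hcardV := aux_card_elementary hp (aux_additive_torsion hVm)
  rw [e0, ← hq, Nat.card_congr (Additive.ofMul : (B ⧸ R) ≃ Additive (B ⧸ R)), hcardV,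
    aux_rank_additive, aux_rank_quotient_pow hp hB]

lemma aux_rank_eq {A : Type*} [CommGroup A] [Finite A] (hp : p.Prime) (hA : IsPGroup p A)
    {N : Subgroup A} (h : ∀ a : A, a ^ p = 1 → a ∈ N) :
    Group.rank ↥N = Group.rank A := by
  have hN : IsPGroup p ↥N := hA.to_subgroup N
  have c1 := aux_card_pker hp hN
  have c2 := aux_card_pker hp hA
  have e : {x : ↥N // x ^ p = 1} ≃ {a : A // a ^ p = 1} :=
    { toFun := fun x => ⟨(x.1 : A), by
        have := congrArg (Subtype.val : ↥N → A) x.2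
        rwa [Subgroup.coe_pow, Subgroup.coe_one] at this⟩
      invFun := fun a => ⟨⟨a.1, h a.1 a.2⟩, by
        apply Subtype.ext
        rw [Subgroup.coe_pow, Subgroup.coe_one]
        exact a.2⟩
      left_inv := fun x => Subtype.ext (Subtype.ext rfl)
      right_inv := fun a => Subtype.ext rfl }
  have hcards : (p : ℕ) ^ Group.rank ↥N = p ^ Group.rank A := by
    rw [← c1, ← c2, Nat.card_congr e]
  exact Nat.pow_right_injective hp.two_le hcards

lemma aux_comm_mem {G : Type*} [Group G] {m : ℕ} {x g : G}
    (hx : x ∈ (⊤ : Subgroup G).lowerCentralSeries m) :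
    g⁻¹ * (x⁻¹ * g * x) ∈ (⊤ : Subgroup G).lowerCentralSeries (m + 1) := by
  have hrw : g⁻¹ * (x⁻¹ * g * x) = ⁅g⁻¹, x⁻¹⁆ := by
    rw [commutatorElement_def]; group
  rw [hrw]
  show ⁅g⁻¹, x⁻¹⁆ ∈ ⁅(⊤ : Subgroup G).lowerCentralSeries m, ⊤⁆
  rw [Subgroup.commutator_comm]
  exact Subgroup.commutator_mem_commutator (Subgroup.mem_top _)
    (Subgroup.inv_mem _ hx)

lemma aux_not_sup_top {p : ℕ} (hp : p.Prime) {G : Type*} [Group G] [Finite G]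
    (hpG : IsPGroup p G) (hna : ¬ ∀ a b : G, a * b = b * a) :
    Subgroup.center G ⊔ commutator G ≠ ⊤ := by
  haveI : Fact p.Prime := ⟨hp⟩
  intro htop
  set W := G ⧸ Subgroup.center G with hW
  set κ := QuotientGroup.mk' (Subgroup.center G) with hκ
  have hκs : Function.Surjective κ := QuotientGroup.mk'_surjective _
  have h1 : Subgroup.map κ (Subgroup.center G ⊔ commutator G) = ⊤ := by
    rw [htop]; exact Subgroup.map_top_of_surjective κ hκs
  rw [Subgroup.map_sup] at h1
  have h2 : Subgroup.map κ (Subgroup.center G) = ⊥ := by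
    rw [Subgroup.map_eq_bot_iff, QuotientGroup.ker_mk']
  have h3 : Subgroup.map κ (commutator G) = commutator W := by
    rw [commutator_def, commutator_def, Subgroup.map_commutator,
      Subgroup.map_top_of_surjective κ hκs]
  rw [h2, h3, bot_sup_eq] at h1
  have hLCS : ∀ k, (⊤ : Subgroup W).lowerCentralSeries k = ⊤ := by
    intro k
    induction k with
    | zero => rfl
    | succ k ih =>
      show ⁅(⊤ : Subgroup W).lowerCentralSeries k, ⊤⁆ = ⊤
      rw [ih, ← commutator_def, h1]
  have hpW : IsPGroup p W := hpG.to_quotient _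
  obtain ⟨k, hk⟩ := nilpotent_iff_lowerCentralSeries.mp hpW.isNilpotent
  rw [hLCS k] at hk
  have hcent : ∀ g : G, g ∈ Subgroup.center G := by
    intro g
    have hg : κ g ∈ (⊤ : Subgroup W) := trivial
    rw [hk, Subgroup.mem_bot] at hg
    exact (QuotientGroup.eq_one_iff g).mp hg
  exact hna fun a b => Subgroup.mem_center_iff.mp (hcent b) a

lemma aux_omega {p : ℕ} (hp : p.Prime) {G : Type u} [Group G] [Finite G]
    (hpG : IsPGroup p G) (hna : ¬ ∀ a b : G, a * b = b * a)
    {n : ℕ} (hn : 2 ≤ n)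
    (h : autC G (n - 1) = autM (Subgroup.center G)) :
    ∀ z : G, z ∈ Subgroup.center G → z ^ p = 1 → z ∈ (⊤ : Subgroup G).lowerCentralSeries (n - 1) := by
  classical
  haveI : Fact p.Prime := ⟨hp⟩
  haveI : NeZero p := ⟨hp.ne_zero⟩
  have hMne := aux_not_sup_top hp hpG hna
  set Ab := Abelianization G with hAb
  set C : Subgroup Ab := (Subgroup.center G).map Abelianization.of with hC
  set Q := Ab ⧸ C with hQ
  set π : G →* Q := (QuotientGroup.mk' C).comp Abelianization.of with hπ
  have hofs : Function.Surjective (Abelianization.of : G →* Ab) := fun x => by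
    obtain ⟨g, hg⟩ := QuotientGroup.mk_surjective x
    exact ⟨g, hg⟩
  have hπs : Function.Surjective π :=
    (QuotientGroup.mk'_surjective C).comp hofs
  have hQnt : ∃ q : Q, q ≠ 1 := by
    by_contra hq
    push_neg at hq
    apply hMne
    rw [Subgroup.eq_top_iff']
    intro g
    have hg1 : π g = 1 := hq _
    have hg2 : Abelianization.of g ∈ C := by
      have : QuotientGroup.mk' C (Abelianization.of g) = 1 := hg1
      exact (QuotientGroup.eq_one_iff _).mp this
    obtain ⟨w, hwZ, hweq⟩ := hg2
    have hker : w⁻¹ * g ∈ commutator G := by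
      have h5 : Abelianization.of (w⁻¹ * g) = 1 := by
        rw [map_mul, map_inv, hweq]
        simp
      exact (QuotientGroup.eq_one_iff _).mp h5
    have : g = w * (w⁻¹ * g) := by group
    rw [this]
    exact Subgroup.mul_mem _ (Subgroup.mem_sup_left hwZ) (Subgroup.mem_sup_right hker)
  have hpQ : IsPGroup p Q := hpG.of_surjective π hπs
  set RQ := (powMonoidHom p : Q →* Q).range with hRQ
  set V := Q ⧸ RQ with hV
  set ρ : G →* V := (QuotientGroup.mk' RQ).comp π with hρ
  have hρs : Function.Surjective ρ := (QuotientGroup.mk'_surjective RQ).comp hπs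
  have hV1 : ∀ v : V, v ^ p = 1 := by
    intro v
    obtain ⟨q, rfl⟩ := QuotientGroup.mk'_surjective RQ v
    rw [← map_pow]
    exact (QuotientGroup.eq_one_iff _).mpr (MonoidHom.mem_range.mpr ⟨q, rfl⟩)
  have hVnt : ∃ v : V, v ≠ 1 := by
    by_contra hv
    push_neg at hv
    have hsurj : ∀ q : Q, ∃ c, c ^ p = q := by
      intro q
      have : QuotientGroup.mk' RQ q = 1 := hv _
      have hmem : q ∈ RQ := (QuotientGroup.eq_one_iff q).mp this
      obtain ⟨c, hc⟩ := hmem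
      exact ⟨c, hc⟩
    have := aux_subsingleton_of_pow_surj hp hpQ hsurj
    obtain ⟨q₀, hq₀⟩ := hQnt
    exact hq₀ (Subsingleton.elim _ _)
  obtain ⟨v₀, hv₀⟩ := hVnt
  haveI : Module (ZMod p) (Additive V) := AddCommGroup.zmodModule (aux_additive_torsion hV1)
  have hv₀' : Additive.ofMul v₀ ≠ 0 := fun h0 => hv₀ (ofMul_eq_zero.mp h0)
  let b := Module.Basis.ofVectorSpace (ZMod p) (Additive V)
  have hrepr : b.repr (Additive.ofMul v₀) ≠ 0 := by
    intro h0
    exact hv₀' (by simpa using congrArg b.repr.symm h0)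
  obtain ⟨i, hi⟩ := Finsupp.ne_iff.mp hrepr
  rw [Finsupp.coe_zero, Pi.zero_apply] at hi
  set fℓ := b.coord i with hfℓ
  have hfv₀ : fℓ (Additive.ofMul v₀) ≠ 0 := by
    rw [hfℓ, Module.Basis.coord_apply]
    exact hi
  -- now fix z
  intro z hz hzp
  have hsmul : (zmultiplesHom (Additive G) (Additive.ofMul z)) ((p : ℕ) : ℤ) = 0 := by
    rw [zmultiplesHom_apply, ← ofMul_zpow, zpow_natCast, hzp]
    rfl
  set ψ : ZMod p →+ Additive G :=
    ZMod.lift p ⟨zmultiplesHom (Additive G) (Additive.ofMul z), hsmul⟩ with hψdef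
  have hψ : ∀ x : ZMod p, ψ x = (x.val : ℤ) • Additive.ofMul z := by
    intro x
    have hx : (((x.val : ℤ) : ℤ) : ZMod p) = x := by
      push_cast
      exact ZMod.natCast_rightInverse x
    conv_lhs => rw [← hx]
    rw [hψdef, ZMod.lift_coe, zmultiplesHom_apply]
  set θ : Additive G →+ ZMod p :=
    fℓ.toAddMonoidHom.comp (MonoidHom.toAdditive ρ) with hθdef
  have hθ : ∀ g : G, θ (Additive.ofMul g) = fℓ (Additive.ofMul (ρ g)) := fun g => rfl
  set σ : G →* G := MonoidHom.toAdditive.symm (ψ.comp θ) with hσdef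
  have hσ : ∀ g : G, σ g = z ^ ((θ (Additive.ofMul g)).val : ℤ) := by
    intro g
    have h6 : σ g = Additive.toMul (ψ (θ (Additive.ofMul g))) := rfl
    rw [h6, hψ, toMul_zsmul]
    rfl
  have hσ_center : ∀ g : G, σ g ∈ Subgroup.center G := by
    intro g
    rw [hσ]
    exact Subgroup.zpow_mem _ hz _
  have hσ_ker : ∀ w, w ∈ Subgroup.center G → σ w = 1 := by
    intro w hw
    have hρw : ρ w = 1 := by
      have hπw : π w = 1 := by
        have : Abelianization.of w ∈ C := Subgroup.mem_map_of_mem _ hw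
        exact (QuotientGroup.eq_one_iff _).mpr this
      rw [hρ, MonoidHom.comp_apply, hπw, map_one]
    have hθw : θ (Additive.ofMul w) = 0 := by
      rw [hθ, hρw]
      exact map_zero fℓ
    rw [hσ, hθw]
    simp [ZMod.val_zero]
  set τ : G →* G :=
    { toFun := fun g => g * σ g
      map_one' := by simp
      map_mul' := by
        intro a b
        have hc : ∀ g : G, g * σ a = σ a * g := fun g => Subgroup.mem_center_iff.mp (hσ_center a) g
        show a * b * σ (a * b) = a * σ a * (b * σ b)
        rw [map_mul]
        calc a * b * (σ a * σ b) = a * (b * σ a * σ b) := by group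
          _ = a * (σ a * b * σ b) := by rw [hc b]
          _ = a * σ a * (b * σ b) := by group } with hτdef
  have hτ : ∀ g : G, τ g = g * σ g := fun g => rfl
  have hτinj : Function.Injective τ := by
    rw [injective_iff_map_eq_one]
    intro g hg
    have hg1 : g * σ g = 1 := hg
    have hg2 : g = (σ g)⁻¹ := eq_inv_of_mul_eq_one_left hg1
    have hgZ : g ∈ Subgroup.center G := by
      rw [hg2]; exact Subgroup.inv_mem _ (hσ_center g)
    have h11 := hσ_ker g hgZ
    rw [h11, mul_one] at hg1
    exact hg1
  set e : MulAut G := MulEquiv.ofBijective τ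
    ⟨hτinj, Finite.injective_iff_surjective.mp hτinj⟩ with hedef
  have he0 : ∀ g : G, e g = g * σ g := fun g => rfl
  have he : ∀ g : G, g⁻¹ * e g ∈ Subgroup.center G := by
    intro g
    rw [he0]
    have : g⁻¹ * (g * σ g) = σ g := by group
    rw [this]
    exact hσ_center g
  have heM : e ∈ autM (Subgroup.center G) := he
  rw [← h] at heM
  have heC : ∀ g : G, ∃ x ∈ (⊤ : Subgroup G).lowerCentralSeries (n - 1 - 1), e g = x⁻¹ * g * x := heM
  obtain ⟨g₀, hg₀⟩ := hρs v₀
  obtain ⟨x, hx, hex⟩ := heC g₀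
  have hσg₀ : σ g₀ ∈ (⊤ : Subgroup G).lowerCentralSeries (n - 1) := by
    have h7 : σ g₀ = g₀⁻¹ * (x⁻¹ * g₀ * x) := by
      rw [← hex, he0]; group
    rw [h7]
    have h8 : n - 1 - 1 = n - 2 := by omega
    have h9 : n - 2 + 1 = n - 1 := by omega
    rw [h8] at hx
    rw [← h9]
    exact aux_comm_mem hx
  have hc₀ : θ (Additive.ofMul g₀) ≠ 0 := by
    rw [hθ, hg₀]
    exact hfv₀
  set m := (θ (Additive.ofMul g₀)).val with hm
  have hzmΓ : z ^ m ∈ (⊤ : Subgroup G).lowerCentralSeries (n - 1) := by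
    have := hσ g₀
    rw [zpow_natCast] at this
    rwa [this] at hσg₀
  have hpm : ¬ p ∣ m := by
    intro hdvd
    rcases Nat.eq_zero_of_dvd_of_lt hdvd ((θ (Additive.ofMul g₀)).val_lt) with h10
    exact hc₀ ((ZMod.val_eq_zero _).mp h10)
  have hcop : Nat.Coprime m p := (Nat.coprime_comm.mp (hp.coprime_iff_not_dvd.mpr hpm))
  obtain ⟨u, -, hu⟩ := Nat.exists_mul_mod_eq_one_of_coprime hcop hp.one_lt
  have hzu : (z ^ m) ^ u = z := by
    rw [← pow_mul]
    have hmu : m * u = p * (m * u / p) + 1 := by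
      conv_lhs => rw [← Nat.div_add_mod (m * u) p]
      rw [hu]
    rw [hmu, pow_add, pow_mul, hzp, one_pow, one_mul, pow_one]
  rw [← hzu]
  exact Subgroup.pow_mem _ hzmΓ u

end AuxRank

/-- if `G` is a finite non-abelian `p`-group, `n ≥ 2`, and
`Aut_c^{n-1}(G) = Autcent(G)`, then `γ_n(G) ⊆ Z(G)` and
`d(γ_n(G)) = d(Z(G))`, where `d` is the minimal number of generators. -/
theorem statement10 {p : ℕ} (hp : p.Prime) {G : Type u} [Group G] [Finite G]
    (hpG : IsPGroup p G) (hna : ¬ ∀ a b : G, a * b = b * a)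
    (n : ℕ) (hn : 2 ≤ n)
    (h : autC G (n - 1) = autM (Subgroup.center G)) :
    (⊤ : Subgroup G).lowerCentralSeries (n - 1) ≤ Subgroup.center G ∧
      Group.rank ((⊤ : Subgroup G).lowerCentralSeries (n - 1)) =
        Group.rank (Subgroup.center G) := by
  classical
  haveI : Fact p.Prime := ⟨hp⟩
  -- conjugations by elements of `γ_{n-1}` are central automorphisms
  have hcomm : ∀ x ∈ (⊤ : Subgroup G).lowerCentralSeries (n - 2), ∀ g : G,
      g⁻¹ * (x⁻¹ * g * x) ∈ Subgroup.center G := by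
    intro x hx g
    have hx' : x ∈ (⊤ : Subgroup G).lowerCentralSeries (n - 1 - 1) := by
      have : n - 1 - 1 = n - 2 := by omega
      rwa [this]
    have hf : (MulAut.conj x⁻¹) ∈ autC G (n - 1) := by
      intro g'
      refine ⟨x, hx', ?_⟩
      rw [MulAut.conj_apply]
      group
    rw [h] at hf
    have := hf g
    simpa [MulAut.conj_apply, mul_assoc] using this
  have part1 : (⊤ : Subgroup G).lowerCentralSeries (n - 1) ≤ Subgroup.center G := by
    have h9 : n - 2 + 1 = n - 1 := by omega
    rw [← h9]
    show ⁅(⊤ : Subgroup G).lowerCentralSeries (n - 2), ⊤⁆ ≤ Subgroup.center G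
    rw [Subgroup.commutator_le]
    intro a ha g _
    have h1 := hcomm a⁻¹ (Subgroup.inv_mem _ ha) g⁻¹
    have h2 := Subgroup.inv_mem _ h1
    have h3 : ⁅a, g⁆ = ((g⁻¹)⁻¹ * ((a⁻¹)⁻¹ * g⁻¹ * a⁻¹))⁻¹ := by
      rw [commutatorElement_def]; group
    rw [h3]
    exact h2
  refine ⟨part1, ?_⟩
  have hΩ := aux_omega hp hpG hna hn h
  have hZp : IsPGroup p ↥(Subgroup.center G) := hpG.to_subgroup _
  have h' : ∀ a : ↥(Subgroup.center G), a ^ p = 1 →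
      a ∈ ((⊤ : Subgroup G).lowerCentralSeries (n - 1)).subgroupOf (Subgroup.center G) := by
    intro a ha
    rw [Subgroup.mem_subgroupOf]
    apply hΩ a.1 a.2
    have := congrArg (Subtype.val : ↥(Subgroup.center G) → G) ha
    rwa [Subgroup.coe_pow, Subgroup.coe_one] at this
  have hrk := aux_rank_eq hp hZp h'
  have erel := Subgroup.subgroupOfEquivOfLe part1
  rw [← Group.rank_congr erel]
  exact hrk
end

section
/- Let p be a prime, let G be a finite non-abelian p-group, and let n ≥ 2. If γ_n(G) = Z(G) and Aut_c^{n-1}(G) is isomorphic as a group to Hom(G/Z(G), γ_n(G)), then Aut_c^{n-1}(G) = Autcent(G). -/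
section Aux
open scoped commutatorElement
variable {G : Type u} [Group G]

theorem comm_left_center (x c z : G) (hz : z ∈ Subgroup.center G) :
    ⁅x * z, c⁆ = ⁅x, c⁆ := by
  have h : c * z = z * c := Subgroup.mem_center_iff.mp hz c
  simp only [commutatorElement_def, mul_inv_rev]
  rw [mul_assoc x z c, ← h]
  group

theorem comm_right_center (x c z : G) (hz : z ∈ Subgroup.center G) :
    ⁅c, x * z⁆ = ⁅c, x⁆ :=
  calc ⁅c, x * z⁆ = ⁅x * z, c⁆⁻¹ := (commutatorElement_inv _ _).symm
    _ = ⁅x, c⁆⁻¹ := by rw [comm_left_center x c z hz]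
    _ = ⁅c, x⁆ := commutatorElement_inv _ _

/-- A central automorphism fixes the commutator subgroup pointwise. -/
theorem central_fixes_commutator (f : MulAut G)
    (hf : ∀ g : G, g⁻¹ * f g ∈ Subgroup.center G) :
    ∀ g ∈ commutator G, f g = g := by
  let S : Subgroup G :=
    { carrier := {g | f g = g}
      one_mem' := by simp
      mul_mem' := by intro a b ha hb; simp only [Set.mem_setOf_eq] at *
                     rw [map_mul, ha, hb]
      inv_mem' := by intro a ha; simp only [Set.mem_setOf_eq] at *
                     rw [map_inv, ha] }
  have hS : commutator G ≤ S := by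
    rw [commutator_eq_closure, Subgroup.closure_le]
    rintro x ⟨a, b, rfl⟩
    show f ⁅a, b⁆ = ⁅a, b⁆
    have ha : f a = a * (a⁻¹ * f a) := by group
    have hb : f b = b * (b⁻¹ * f b) := by group
    rw [map_commutatorElement, ha, hb, comm_left_center a _ _ (hf a),
      comm_right_center b a _ (hf b)]
  exact fun g hg => hS hg
end Aux

open scoped commutatorElement

/-- if `G` is a finite non-abelian `p`-group, `n ≥ 2`,
`γ_n(G) = Z(G)` and `Aut_c^{n-1}(G)` is isomorphic as a group to
`Hom(G/Z(G), γ_n(G))` (with pointwise multiplication), then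
`Aut_c^{n-1}(G) = Autcent(G)`. -/
theorem statement11 {p : ℕ} (hp : p.Prime) {G : Type u} [Group G] [Finite G]
    (hpG : IsPGroup p G) (hna : ¬ ∀ a b : G, a * b = b * a)
    (n : ℕ) (hn : 2 ≤ n)
    (hγZ : (⊤ : Subgroup G).lowerCentralSeries (n - 1) = Subgroup.center G)
    (hiso : ∃ φ : (autC G (n - 1)) ≃
        ((G ⧸ Subgroup.center G) →* ((⊤ : Subgroup G).lowerCentralSeries (n - 1))),
      ∀ (f₁ f₂ : autC G (n - 1)) (x : G ⧸ Subgroup.center G),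
        φ (f₁ * f₂) x = φ f₁ x * φ f₂ x) :
    autC G (n - 1) = autM (Subgroup.center G) := by
  classical
  obtain ⟨φ, -⟩ := hiso
  -- the easy inclusion
  have hle : autC G (n - 1) ≤ autM (Subgroup.center G) := by
    intro f hf
    intro g
    obtain ⟨x, hx, hx2⟩ := hf g
    have hmem : ⁅x⁻¹, g⁻¹⁆ ∈ (⊤ : Subgroup G).lowerCentralSeries (n - 1) := by
      have hstep : n - 1 = (n - 1 - 1) + 1 := by omega
      rw [hstep, Subgroup.lowerCentralSeries_succ]
      exact Subgroup.commutator_mem_commutator (Subgroup.inv_mem _ hx)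
        (Subgroup.mem_top _)
    have h2 : (⁅x⁻¹, g⁻¹⁆)⁻¹ ∈ Subgroup.center G := by
      rw [← hγZ]; exact Subgroup.inv_mem _ hmem
    have h3 : g⁻¹ * f g = (⁅x⁻¹, g⁻¹⁆)⁻¹ := by
      rw [hx2, commutatorElement_def]; group
    rw [h3]; exact h2
  -- central automorphisms fix the center pointwise
  have hcenter_le : Subgroup.center G ≤ commutator G := by
    rw [← hγZ, ← Subgroup.top_lowerCentralSeries_one]
    exact Subgroup.lowerCentralSeries_antitone ⊤ (by omega)
  have hfixZ : ∀ f : MulAut G, f ∈ autM (Subgroup.center G) →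
      ∀ z ∈ Subgroup.center G, f z = z :=
    fun f hf z hz => central_fixes_commutator f hf z (hcenter_le hz)
  -- the injection from central automorphisms into Hom(G/Z, γ_n)
  let F : (autM (Subgroup.center G)) →
      ((G ⧸ Subgroup.center G) →* ((⊤ : Subgroup G).lowerCentralSeries (n - 1))) := fun f =>
    QuotientGroup.lift (Subgroup.center G)
      { toFun := fun g => ⟨g⁻¹ * f.1 g, by rw [hγZ]; exact f.2 g⟩
        map_one' := by ext; simp
        map_mul' := by
          intro a b
          ext
          show (a * b)⁻¹ * f.1 (a * b) = (a⁻¹ * f.1 a) * (b⁻¹ * f.1 b)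
          have hc : b⁻¹ * (a⁻¹ * f.1 a) = (a⁻¹ * f.1 a) * b⁻¹ :=
            Subgroup.mem_center_iff.mp (f.2 a) b⁻¹
          rw [map_mul, mul_inv_rev]
          calc b⁻¹ * a⁻¹ * (f.1 a * f.1 b)
              = (b⁻¹ * (a⁻¹ * f.1 a)) * f.1 b := by group
            _ = ((a⁻¹ * f.1 a) * b⁻¹) * f.1 b := by rw [hc]
            _ = (a⁻¹ * f.1 a) * (b⁻¹ * f.1 b) := by group }
      (by intro z hz
          ext
          show z⁻¹ * f.1 z = 1
          rw [hfixZ f.1 f.2 z hz]; simp)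
  have hFinj : Function.Injective F := by
    intro f₁ f₂ h
    have key : ∀ g : G, g⁻¹ * f₁.1 g = g⁻¹ * f₂.1 g := by
      intro g
      have := congrArg (fun ψ => ((ψ (QuotientGroup.mk g) :
        (⊤ : Subgroup G).lowerCentralSeries (n - 1)) : G)) h
      exact this
    apply Subtype.ext
    apply MulEquiv.ext
    intro g
    exact mul_left_cancel (key g)
  -- cardinality argument
  have hfin : Finite ((G ⧸ Subgroup.center G) →* ((⊤ : Subgroup G).lowerCentralSeries (n - 1))) :=
    Finite.of_injective
      (fun ψ => (ψ : G ⧸ Subgroup.center G → (⊤ : Subgroup G).lowerCentralSeries (n - 1)))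
      DFunLike.coe_injective
  have h1 : Nat.card (autC G (n - 1)) =
      Nat.card ((G ⧸ Subgroup.center G) →* ((⊤ : Subgroup G).lowerCentralSeries (n - 1))) :=
    Nat.card_congr φ
  have h2 : Nat.card (autM (Subgroup.center G)) ≤
      Nat.card ((G ⧸ Subgroup.center G) →* ((⊤ : Subgroup G).lowerCentralSeries (n - 1))) :=
    Nat.card_le_card_of_injective F hFinj
  exact Subgroup.eq_of_le_of_card_ge hle (h1 ▸ h2)
end

section
/- Let p be a prime, let n ≥ 2, and let G be a finite non-abelian p-group such that Aut_{Z(G)}^{γ_n(G)}(G) = Autcent(G). Then G is purely non-abelian and γ_n(G) ⊆ Z(G). -/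
lemma mem_autM_iff {G : Type*} [Group G] {M : Subgroup G} {f : MulAut G} :
    f ∈ autM M ↔ ∀ g : G, g⁻¹ * f g ∈ M := Iff.rfl

lemma mem_autN_iff {G : Type*} [Group G] {N : Subgroup G} {f : MulAut G} :
    f ∈ autN N ↔ ∀ n ∈ N, f n = n := Iff.rfl

/-- A nontrivial finite `p`-group has an element of order `p`. -/
lemma aux_exists_orderOf_eq_p {p : ℕ} (hp : p.Prime) {A : Type*} [Group A] [Finite A]
    [Nontrivial A] (hA : IsPGroup p A) : ∃ a : A, orderOf a = p := by
  haveI : Fact p.Prime := ⟨hp⟩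
  obtain ⟨k, hk⟩ := IsPGroup.iff_card.mp hA
  have h1 : 1 < Nat.card A := Finite.one_lt_card_iff_nontrivial.mpr ‹_›
  have hk0 : k ≠ 0 := by rintro rfl; rw [hk] at h1; simp at h1
  have hdvd : p ∣ Nat.card A := by rw [hk]; exact dvd_pow_self p hk0
  exact exists_prime_orderOf_dvd_card' p hdvd

/-- Existence of a nontrivial central-valued homomorphism `B →* K`. -/
lemma aux_exists_central_hom {p : ℕ} (hp : p.Prime) {B K : Type*} [CommGroup B] [Group K]
    [Finite B] [Finite K] [Nontrivial B] [Nontrivial K]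
    (hB : IsPGroup p B) (hK : IsPGroup p K) :
    ∃ σ : B →* K, (∀ b, σ b ∈ Subgroup.center K) ∧ ∃ b : B, σ b ≠ 1 := by
  haveI : Fact p.Prime := ⟨hp⟩
  -- an element of order p in the center of K
  haveI := hK.center_nontrivial
  obtain ⟨z, hz⟩ := aux_exists_orderOf_eq_p hp (hK.to_subgroup (Subgroup.center K))
  set z' : K := (z : K) with hz'def
  have hz' : orderOf z' = p := by
    rw [← hz]; exact Subgroup.orderOf_coe z
  have hz'c : z' ∈ Subgroup.center K := z.2
  -- a subgroup of B of index p
  obtain ⟨k, hk⟩ := IsPGroup.iff_card.mp hB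
  have h1 : 1 < Nat.card B := Finite.one_lt_card_iff_nontrivial.mpr ‹_›
  have hk0 : k ≠ 0 := by rintro rfl; rw [hk] at h1; simp at h1
  obtain ⟨M, hM⟩ := Sylow.exists_subgroup_card_pow_prime (G := B) p
    (n := k - 1) (by rw [hk]; exact pow_dvd_pow p (by omega))
  have hQcard : Nat.card (B ⧸ M) = p := by
    have hcard := Subgroup.card_eq_card_quotient_mul_card_subgroup M
    rw [hk, hM] at hcard
    have hppos : 0 < p ^ (k - 1) := pow_pos hp.pos _
    have h2 : p * p ^ (k - 1) = Nat.card (B ⧸ M) * p ^ (k - 1) := by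
      rw [← hcard, ← pow_succ']; congr 1; omega
    exact (Nat.eq_of_mul_eq_mul_right hppos h2).symm
  haveI : IsCyclic (B ⧸ M) := isCyclic_of_prime_card hQcard
  have hZcard : Nat.card (Subgroup.zpowers z') = p := by
    rw [Nat.card_zpowers, hz']
  haveI : IsCyclic (Subgroup.zpowers z') := isCyclic_of_prime_card hZcard
  let e2 : (B ⧸ M) ≃* Subgroup.zpowers z' := mulEquivOfPrimeCardEq hQcard hZcard
  let σ : B →* K :=
    (Subgroup.zpowers z').subtype.comp (e2.toMonoidHom.comp (QuotientGroup.mk' M))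
  have hσ : ∀ b : B, σ b = ((e2 (QuotientGroup.mk' M b) : Subgroup.zpowers z') : K) :=
    fun b => rfl
  refine ⟨σ, ?_, ?_⟩
  · intro b
    rw [hσ]
    exact Subgroup.zpowers_le.mpr hz'c (e2 (QuotientGroup.mk' M b)).2
  · -- an element outside M
    have hMne : M ≠ ⊤ := by
      intro hM'
      rw [hM', Subgroup.card_top, hk] at hM
      have := Nat.pow_lt_pow_right hp.one_lt (show k - 1 < k by omega)
      omega
    obtain ⟨b, hb⟩ : ∃ b : B, b ∉ M := by
      by_contra hcon
      push_neg at hcon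
      exact hMne ((Subgroup.eq_top_iff' M).mpr hcon)
    refine ⟨b, fun hone => hb ?_⟩
    rw [hσ] at hone
    have h3 : e2 (QuotientGroup.mk' M b) = 1 := Subtype.ext hone
    have h4 : (QuotientGroup.mk' M b : B ⧸ M) = 1 :=
      e2.injective (h3.trans (map_one e2).symm)
    exact (QuotientGroup.eq_one_iff b).mp h4

open scoped commutatorElement in
/-- if `G` is a finite non-abelian `p`-group, `n ≥ 2`, and
`Aut_{Z(G)}^{γ_n(G)}(G) = Autcent(G)`, then `G` is purely non-abelian and
`γ_n(G) ⊆ Z(G)`. -/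
theorem statement13 {p : ℕ} (hp : p.Prime) (n : ℕ) (hn : 2 ≤ n)
    {G : Type u} [Group G] [Finite G]
    (hpG : IsPGroup p G) (hna : ¬ ∀ a b : G, a * b = b * a)
    (h : autMN ((⊤ : Subgroup G).lowerCentralSeries (n - 1)) (Subgroup.center G) =
      autM (Subgroup.center G)) :
    PurelyNonabelian G ∧ (⊤ : Subgroup G).lowerCentralSeries (n - 1) ≤ Subgroup.center G := by
  have hm : n - 1 = (n - 2) + 1 := by omega
  constructor
  · -- purely non-abelian
    rintro ⟨K, B, _, _, hBnt, ⟨e⟩⟩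
    haveI : Finite (K × B) := Finite.of_equiv G e.toEquiv
    haveI : Finite K := Finite.prod_left B
    haveI : Finite B := Finite.prod_right K
    have hpK : IsPGroup p K :=
      hpG.of_injective (e.symm.toMonoidHom.comp (MonoidHom.inl K B))
        (fun a b hab => by
          have := e.symm.injective hab
          exact congrArg Prod.fst this)
    have hpB : IsPGroup p B :=
      hpG.of_injective (e.symm.toMonoidHom.comp (MonoidHom.inr K B))
        (fun a b hab => by
          have := e.symm.injective hab
          exact congrArg Prod.snd this)
    have hKna : ¬ ∀ a b : K, a * b = b * a := by
      intro hcomm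
      apply hna
      intro a b
      apply e.injective
      rw [map_mul, map_mul]
      exact Prod.ext (hcomm _ _) (mul_comm _ _)
    haveI : Nontrivial K := by
      by_contra hcon
      haveI := not_nontrivial_iff_subsingleton.mp hcon
      exact hKna fun a b => Subsingleton.elim _ _
    obtain ⟨σ, hσc, b₀, hb₀⟩ := aux_exists_central_hom hp hpB hpK
    -- the automorphism (k, b) ↦ (k * σ b, b) of K × B
    let f : (K × B) ≃* (K × B) :=
      { toFun := fun x => (x.1 * σ x.2, x.2)
        invFun := fun x => (x.1 * (σ x.2)⁻¹, x.2)
        left_inv := fun x => by simp [mul_assoc]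
        right_inv := fun x => by simp [mul_assoc]
        map_mul' := fun x y => by
          have hc : σ x.2 * y.1 = y.1 * σ x.2 :=
            ((Subgroup.mem_center_iff.mp (hσc x.2)) y.1).symm
          ext
          · show x.1 * y.1 * σ (x.2 * y.2) = x.1 * σ x.2 * (y.1 * σ y.2)
            rw [map_mul]
            calc x.1 * y.1 * (σ x.2 * σ y.2)
                = x.1 * (y.1 * σ x.2) * σ y.2 := by group
              _ = x.1 * (σ x.2 * y.1) * σ y.2 := by rw [← hc]
              _ = x.1 * σ x.2 * (y.1 * σ y.2) := by group
          · rfl }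
    let f' : MulAut G := (e.trans f).trans e.symm
    have hf'apply : ∀ g : G, f' g = e.symm (f (e g)) := fun g => rfl
    have hf'M : f' ∈ autM (Subgroup.center G) := by
      rw [mem_autM_iff]
      intro g
      have key : g⁻¹ * f' g = e.symm (σ (e g).2, 1) := by
        rw [hf'apply]
        have : f (e g) = e g * (σ (e g).2, 1) := by
          show ((e g).1 * σ (e g).2, (e g).2) = _
          ext
          · rfl
          · show (e g).2 = (e g).2 * 1; rw [mul_one]
        rw [this, map_mul, e.symm_apply_apply]
        group
      rw [key, Subgroup.mem_center_iff]
      intro y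
      apply e.injective
      rw [map_mul, map_mul, e.apply_symm_apply]
      ext
      · rw [Prod.fst_mul, Prod.fst_mul]
        exact (Subgroup.mem_center_iff.mp (hσc (e g).2)) (e y).1
      · rw [Prod.snd_mul, Prod.snd_mul]
        simp
    have hf'N : f' ∈ autN (Subgroup.center G) := by
      have := h ▸ hf'M
      exact (Subgroup.mem_inf.mp this).2
    -- the central element e.symm (1, b₀) is not fixed
    have hz₀ : e.symm (1, b₀) ∈ Subgroup.center G := by
      rw [Subgroup.mem_center_iff]
      intro y
      apply e.injective
      rw [map_mul, map_mul, e.apply_symm_apply]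
      ext
      · rw [Prod.fst_mul, Prod.fst_mul]
        simp
      · rw [Prod.snd_mul, Prod.snd_mul]
        exact mul_comm _ _
    have hfix := (mem_autN_iff.mp hf'N) _ hz₀
    rw [hf'apply, e.apply_symm_apply] at hfix
    have : ((1 : K) * σ b₀, b₀) = (1, b₀) := by
      have := e.symm.injective (hfix)
      exact this
    apply hb₀
    have := congrArg Prod.fst this
    simpa using this
  · -- γ_n(G) ≤ Z(G)
    have key : ∀ x ∈ (⊤ : Subgroup G).lowerCentralSeries (n - 2), ∀ g : G,
        g⁻¹ * (x * g * x⁻¹) ∈ Subgroup.center G := by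
      intro x hx g
      have hconj : MulAut.conj x ∈ autMN ((⊤ : Subgroup G).lowerCentralSeries (n - 1))
          (Subgroup.center G) := by
        rw [autMN, Subgroup.mem_inf]
        constructor
        · rw [mem_autM_iff]
          intro y
          rw [hm]
          have hmem : ⁅x, y⁻¹⁆ ∈ ⁅(⊤ : Subgroup G).lowerCentralSeries (n - 2), (⊤ : Subgroup G)⁆ :=
            Subgroup.commutator_mem_commutator hx (Subgroup.mem_top _)
          have heq : y⁻¹ * MulAut.conj x y = ⁅x, y⁻¹⁆⁻¹ := by
            rw [MulAut.conj_apply]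
            show y⁻¹ * (x * y * x⁻¹) = (x * y⁻¹ * x⁻¹ * y⁻¹⁻¹)⁻¹
            group
          rw [heq]
          exact Subgroup.inv_mem _ hmem
        · rw [mem_autN_iff]
          intro z hz
          rw [MulAut.conj_apply]
          have := (Subgroup.mem_center_iff.mp hz) x
          rw [this]
          group
      rw [h, mem_autM_iff] at hconj
      have := hconj g
      rwa [MulAut.conj_apply] at this
    rw [hm]
    refine le_trans (le_of_eq rfl :
      (⊤ : Subgroup G).lowerCentralSeries ((n - 2) + 1) ≤ ⁅(⊤ : Subgroup G).lowerCentralSeries (n - 2), (⊤ : Subgroup G)⁆)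
      (Subgroup.commutator_le.mpr ?_)
    intro x hx g _
    have hc := key x hx g
    have heq : ⁅x, g⁆ = g * (g⁻¹ * (x * g * x⁻¹)) * g⁻¹ := by
      show x * g * x⁻¹ * g⁻¹ = _
      group
    rw [heq, (Subgroup.mem_center_iff.mp hc) g]
    have : g⁻¹ * (x * g * x⁻¹) * g * g⁻¹ = g⁻¹ * (x * g * x⁻¹) := by group
    rw [this]
    exact hc
end

section
/- Let p be a prime, let n ≥ 2, and let G be a finite non-abelian p-group. If γ_n(G) = Z(G), then Aut_{Z(G)}^{γ_n(G)}(G) = Autcent(G). -/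
open scoped commutatorElement

/-- if `G` is a finite non-abelian `p`-group, `n ≥ 2`, and
`γ_n(G) = Z(G)`, then `Aut_{Z(G)}^{γ_n(G)}(G) = Autcent(G)`. -/
theorem statement15 {p : ℕ} (hp : p.Prime) (n : ℕ) (hn : 2 ≤ n)
    {G : Type u} [Group G] [Finite G]
    (hpG : IsPGroup p G) (hna : ¬ ∀ a b : G, a * b = b * a)
    (h : (⊤ : Subgroup G).lowerCentralSeries (n - 1) = Subgroup.center G) :
    autMN ((⊤ : Subgroup G).lowerCentralSeries (n - 1)) (Subgroup.center G) =
      autM (Subgroup.center G) := by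
  have key : ∀ (x z y w : G), z ∈ Subgroup.center G → w ∈ Subgroup.center G →
      ⁅x * z, y * w⁆ = ⁅x, y⁆ := by
    intro x z y w hz hw
    have hz' := Subgroup.mem_center_iff.mp hz
    have hw' := Subgroup.mem_center_iff.mp hw
    have hc : ∀ g : G, (x * z) * g * (x * z)⁻¹ = x * g * x⁻¹ := by
      intro g
      have : z * g * z⁻¹ = g := by
        rw [← hz' g, mul_assoc, mul_inv_cancel, mul_one]
      calc (x * z) * g * (x * z)⁻¹ = x * (z * g * z⁻¹) * x⁻¹ := by group
        _ = x * g * x⁻¹ := by rw [this]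
    calc ⁅x * z, y * w⁆ = (x * z) * (y * w) * (x * z)⁻¹ * (y * w)⁻¹ :=
          commutatorElement_def _ _
      _ = x * (y * w) * x⁻¹ * (y * w)⁻¹ := by rw [hc (y * w)]
      _ = x * y * (w * x⁻¹ * w⁻¹) * y⁻¹ := by rw [mul_inv_rev]; group
      _ = ⁅x, y⁆ := by
          rw [← hw' x⁻¹, mul_assoc x⁻¹ w, mul_inv_cancel, mul_one,
            commutatorElement_def]
  unfold autMN
  rw [h, inf_eq_left]
  intro f hf z hz
  have hle : Subgroup.center G ≤ MonoidHom.eqLocus (MulEquiv.toMonoidHom (f : G ≃* G))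
      (MonoidHom.id G) := by
    rw [← h]
    have h1 : (⊤ : Subgroup G).lowerCentralSeries (n - 1) ≤ (⊤ : Subgroup G).lowerCentralSeries 1 :=
      Subgroup.lowerCentralSeries_antitone _ (by omega)
    refine le_trans h1 ?_
    rw [Subgroup.top_lowerCentralSeries_one, commutator_def, Subgroup.commutator_le]
    intro a _ b _
    show (f : G ≃* G).toMonoidHom ⁅a, b⁆ = MonoidHom.id G ⁅a, b⁆
    have ha : (f : G ≃* G) a = a * (a⁻¹ * f a) := by group
    have hb : (f : G ≃* G) b = b * (b⁻¹ * f b) := by group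
    simp only [MulEquiv.coe_toMonoidHom, MonoidHom.id_apply, map_commutatorElement]
    rw [ha, hb, key a _ b _ (hf a) (hf b)]
  exact hle hz
end
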